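/- arXiv:2312.11543 — 4 statements merged into one kernel-verified Lean document; each statement's English description precedes it below -/
import Mathlib

section
/- Cayley's formula: the number of spanning trees of the complete graph K_n on n ≥ 2 vertices equals n^{n−2}. -/
namespace Cayley

open SimpleGraph Finset

set_option linter.unusedSectionVars false
set_option linter.unusedVariables false

variable {n : ℕ} [NeZero n]

/-! ### Basic defs -/

/-- Neighbors of `v` in `G` as a `Finset`. -/
noncomputable def nbrs (G : SimpleGraph (Fin n)) (v : Fin n) : Finset (Fin n) :=
  (Set.toFinite (G.neighborSet v)).toFinset

lemma mem_nbrs {G : SimpleGraph (Fin n)} {v w : Fin n} : w ∈ nbrs G v ↔ G.Adj v w := by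
  simp [nbrs]

/-- Degree (classical). -/
noncomputable def degc (G : SimpleGraph (Fin n)) (v : Fin n) : ℕ := (nbrs G v).card

/-- `G` is a tree with vertex set `S`. -/
def TreeOn (S : Finset (Fin n)) (G : SimpleGraph (Fin n)) : Prop :=
  (∀ ⦃v w⦄, G.Adj v w → v ∈ S) ∧ (∀ ⦃v w⦄, v ∈ S → w ∈ S → G.Reachable v w) ∧ G.IsAcyclic

/-- Remove all edges incident to `l`. -/
def eraseV (G : SimpleGraph (Fin n)) (l : Fin n) : SimpleGraph (Fin n) where
  Adj v w := G.Adj v w ∧ v ≠ l ∧ w ≠ l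
  symm := ⟨fun v w ⟨h, h1, h2⟩ => ⟨h.symm, h2, h1⟩⟩
  loopless := ⟨fun v ⟨h, _⟩ => G.loopless.irrefl v h⟩

lemma eraseV_adj {G : SimpleGraph (Fin n)} {l v w : Fin n} :
    (eraseV G l).Adj v w ↔ G.Adj v w ∧ v ≠ l ∧ w ≠ l := Iff.rfl

lemma eraseV_le {G : SimpleGraph (Fin n)} {l : Fin n} : eraseV G l ≤ G := fun _ _ h => h.1

/-- The single-edge graph. -/
def edgeG (l a : Fin n) : SimpleGraph (Fin n) := fromEdgeSet {s(l, a)}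

lemma edgeG_adj {l a v w : Fin n} :
    (edgeG l a).Adj v w ↔ (s(v, w) = s(l, a)) ∧ v ≠ w := by
  simp [edgeG, fromEdgeSet_adj]

/-- min of a finset, with default. -/
noncomputable def fmin (T : Finset (Fin n)) : Fin n :=
  if h : T.Nonempty then T.min' h else 0

noncomputable def fmax (T : Finset (Fin n)) : Fin n :=
  if h : T.Nonempty then T.max' h else 0

lemma fmin_eq {T : Finset (Fin n)} (h : T.Nonempty) : fmin T = T.min' h := dif_pos h
lemma fmax_eq {T : Finset (Fin n)} (h : T.Nonempty) : fmax T = T.max' h := dif_pos h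

lemma fmin_mem {T : Finset (Fin n)} (h : T.Nonempty) : fmin T ∈ T := by
  rw [fmin_eq h]; exact T.min'_mem h

lemma fmax_mem {T : Finset (Fin n)} (h : T.Nonempty) : fmax T ∈ T := by
  rw [fmax_eq h]; exact T.max'_mem h

/-- Leaves of `G` inside `S`. -/
noncomputable def leafSet (S : Finset (Fin n)) (G : SimpleGraph (Fin n)) : Finset (Fin n) :=
  S.filter (fun v => degc G v = 1)

noncomputable def minLeaf (S : Finset (Fin n)) (G : SimpleGraph (Fin n)) : Fin n :=
  fmin (leafSet S G)

/-- The unique neighbor of a leaf (or junk). -/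
noncomputable def nbr (G : SimpleGraph (Fin n)) (l : Fin n) : Fin n := fmin (nbrs G l)

/-- Prüfer encoding. -/
noncomputable def encode (S : Finset (Fin n)) (G : SimpleGraph (Fin n)) : List (Fin n) :=
  if h : 2 < S.card ∧ minLeaf S G ∈ S then
    nbr G (minLeaf S G) :: encode (S.erase (minLeaf S G)) (eraseV G (minLeaf S G))
  else []
termination_by S.card
decreasing_by exact Finset.card_erase_lt_of_mem h.2

/-- Prüfer decoding. -/
noncomputable def decode (S : Finset (Fin n)) : List (Fin n) → SimpleGraph (Fin n)
  | [] => edgeG (fmin S) (fmax S)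
  | a :: rest =>
      decode (S.erase (fmin (S \ (a :: rest).toFinset))) rest ⊔
        edgeG (fmin (S \ (a :: rest).toFinset)) a

/-! ### Small lemmas about trees on `S` -/

lemma TreeOn.nbrs_subset {S : Finset (Fin n)} {G : SimpleGraph (Fin n)} (hT : TreeOn S G)
    {v : Fin n} : nbrs G v ⊆ S := by
  intro w hw
  rw [mem_nbrs] at hw
  exact hT.1 hw.symm

lemma degc_eq_one_iff {G : SimpleGraph (Fin n)} {l : Fin n} :
    degc G l = 1 ↔ nbrs G l = {nbr G l} := by
  constructor
  · intro h
    obtain ⟨x, hx⟩ := Finset.card_eq_one.mp h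
    have : nbr G l = x := by
      rw [nbr, hx, fmin_eq (Finset.singleton_nonempty x)]
      simp
    rw [this, hx]
  · intro h; rw [degc, h]; simp

lemma nbrs_of_leaf {G : SimpleGraph (Fin n)} {l : Fin n} (h : degc G l = 1) :
    nbrs G l = {nbr G l} := degc_eq_one_iff.mp h

lemma adj_nbr_of_leaf {G : SimpleGraph (Fin n)} {l : Fin n} (h : degc G l = 1) :
    G.Adj l (nbr G l) := by
  have := nbrs_of_leaf h
  have : nbr G l ∈ nbrs G l := by rw [this]; simp
  rwa [mem_nbrs] at this

/-- any walk starting in `S` stays in `S`. -/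
lemma walk_support_subset {S : Finset (Fin n)} {G : SimpleGraph (Fin n)}
    (hE : ∀ ⦃v w⦄, G.Adj v w → v ∈ S) :
    ∀ {u w : Fin n} (p : G.Walk u w), u ∈ S → ∀ x ∈ p.support, x ∈ S := by
  intro u w p
  induction p with
  | nil => intro hu x hx; simp at hx; subst hx; exact hu
  | cons h q ih =>
    intro hu x hx
    simp only [Walk.support_cons, List.mem_cons] at hx
    rcases hx with rfl | hx
    · exact hu
    · exact ih (hE h.symm) x hx

/-- In a tree on `S` with at least 2 vertices, every vertex of `S` has a neighbor. -/
lemma exists_adj {S : Finset (Fin n)} {G : SimpleGraph (Fin n)} (hT : TreeOn S G)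
    (h2 : 2 ≤ S.card) {v : Fin n} (hv : v ∈ S) : (nbrs G v).Nonempty := by
  have h1 : 1 < S.card := by omega
  obtain ⟨w, hw, hne⟩ := Finset.exists_mem_ne h1 v
  obtain ⟨p⟩ := hT.2.1 hv hw
  cases p with
  | nil => exact absurd rfl hne.symm
  | cons h q => exact ⟨_, mem_nbrs.mpr h⟩

lemma one_le_degc {S : Finset (Fin n)} {G : SimpleGraph (Fin n)} (hT : TreeOn S G)
    (h2 : 2 ≤ S.card) {v : Fin n} (hv : v ∈ S) : 1 ≤ degc G v :=
  Finset.card_pos.mpr (exists_adj hT h2 hv)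

/-! ### Leaf existence -/

lemma reach_induce {S : Finset (Fin n)} {G : SimpleGraph (Fin n)}
    (hE : ∀ ⦃v w⦄, G.Adj v w → v ∈ S) :
    ∀ {u w : Fin n} (p : G.Walk u w) (hu : u ∈ S) (hw : w ∈ S),
      (G.induce (↑S : Set (Fin n))).Reachable ⟨u, hu⟩ ⟨w, hw⟩ := by
  intro u w p
  induction p with
  | nil => intro hu hw; exact Reachable.refl _
  | cons h q ih =>
    intro hu hw
    have hb : _ ∈ S := hE h.symm
    exact (SimpleGraph.Adj.reachable
      (show (G.induce (↑S : Set (Fin n))).Adj ⟨_, hu⟩ ⟨_, hb⟩ by simpa using h)).trans (ih hb hw)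

lemma induce_isTree {S : Finset (Fin n)} {G : SimpleGraph (Fin n)} (hT : TreeOn S G)
    (h1 : S.Nonempty) : (G.induce (↑S : Set (Fin n))).IsTree := by
  constructor
  · rw [connected_iff]
    constructor
    · rintro ⟨u, hu⟩ ⟨w, hw⟩
      obtain ⟨p⟩ := hT.2.1 hu hw
      exact reach_induce hT.1 p hu hw
    · obtain ⟨x, hx⟩ := h1
      exact ⟨⟨x, hx⟩⟩
  · intro v c hc
    have hinj : Function.Injective (SimpleGraph.Embedding.induce (↑S : Set (Fin n))
        (G := G)).toHom := Subtype.val_injective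
    exact hT.2.2 _ ((Walk.map_isCycle_iff_of_injective hinj).mpr hc)

lemma exists_leaf {S : Finset (Fin n)} {G : SimpleGraph (Fin n)} (hT : TreeOn S G)
    (h2 : 2 ≤ S.card) : (leafSet S G).Nonempty := by
  classical
  have h1 : S.Nonempty := Finset.card_pos.mp (by omega)
  have htree := induce_isTree hT h1
  have hcard : Fintype.card (↑S : Set (Fin n)) = S.card := by
    simp
  have hedge := htree.card_edgeFinset
  have hhs := (G.induce (↑S : Set (Fin n))).sum_degrees_eq_twice_card_edges
  have hpos : ∀ x : (↑S : Set (Fin n)), 0 < (G.induce (↑S : Set (Fin n))).degree x := by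
    intro x
    rw [SimpleGraph.degree_pos_iff_exists_adj]
    have h1' : 1 < S.card := by omega
    obtain ⟨w, hwS, hwne⟩ := Finset.exists_mem_ne h1' x.1
    obtain ⟨p⟩ := htree.isConnected.preconnected x ⟨w, hwS⟩
    cases p with
    | nil => exact absurd rfl hwne
    | cons h q => exact ⟨_, h⟩
  have hex : ∃ x : (↑S : Set (Fin n)), (G.induce (↑S : Set (Fin n))).degree x = 1 := by
    by_contra hno
    push_neg at hno
    have hall : ∀ x ∈ (Finset.univ : Finset (↑S : Set (Fin n))),
        2 ≤ (G.induce (↑S : Set (Fin n))).degree x := by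
      intro x _
      have h1 := hpos x
      have h2 := hno x
      omega
    have hge := Finset.card_nsmul_le_sum Finset.univ
      (fun x => (G.induce (↑S : Set (Fin n))).degree x) 2 hall
    rw [hhs] at hge
    rw [Finset.card_univ, hcard, smul_eq_mul] at hge
    omega
  obtain ⟨x, hx⟩ := hex
  refine ⟨x.1, Finset.mem_filter.mpr ⟨x.2, ?_⟩⟩
  have himg : nbrs G x.1 =
      ((G.induce (↑S : Set (Fin n))).neighborFinset x).image Subtype.val := by
    ext w
    simp only [mem_nbrs, Finset.mem_image, SimpleGraph.mem_neighborFinset]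
    constructor
    · intro h
      exact ⟨⟨w, hT.1 h.symm⟩, by simpa using h, rfl⟩
    · rintro ⟨y, hy, rfl⟩
      simpa using hy
  rw [degc, himg, Finset.card_image_of_injective _ Subtype.val_injective]
  exact hx

lemma minLeaf_mem {S : Finset (Fin n)} {G : SimpleGraph (Fin n)} (hT : TreeOn S G)
    (h2 : 2 ≤ S.card) : minLeaf S G ∈ S := by
  have h := exists_leaf hT h2
  have := fmin_mem h
  rw [← minLeaf] at this
  exact Finset.mem_of_mem_filter _ this

lemma minLeaf_degc {S : Finset (Fin n)} {G : SimpleGraph (Fin n)} (hT : TreeOn S G)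
    (h2 : 2 ≤ S.card) : degc G (minLeaf S G) = 1 := by
  have h := exists_leaf hT h2
  have := fmin_mem h
  rw [← minLeaf] at this
  exact (Finset.mem_filter.mp this).2

/-! ### Walks avoiding a vertex -/

lemma reach_eraseV {G : SimpleGraph (Fin n)} {l : Fin n} :
    ∀ {u w : Fin n} (p : G.Walk u w), l ∉ p.support → (eraseV G l).Reachable u w := by
  intro u w p
  induction p with
  | nil => intro _; exact Reachable.refl _
  | cons h q ih =>
    intro hs
    simp only [Walk.support_cons, List.mem_cons, not_or] at hs
    have hadj : (eraseV G l).Adj _ _ :=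
      eraseV_adj.mpr ⟨h, fun he => hs.1 he.symm, fun he => hs.2 (he ▸ q.start_mem_support)⟩
    exact hadj.reachable.trans (ih hs.2)

/-- degree-2 vertices stay on paths: in a tree, a path between two non-`l` vertices avoids
the leaf `l`. -/
lemma path_avoids_leaf {S : Finset (Fin n)} {G : SimpleGraph (Fin n)} (hT : TreeOn S G)
    {l : Fin n} (hdeg : degc G l = 1) {u w : Fin n} (hu : u ≠ l) (hw : w ≠ l)
    (p : G.Walk u w) (hp : p.IsPath) : l ∉ p.support := by
  intro hl
  have hnb := nbrs_of_leaf hdeg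
  set a := nbr G l with ha
  obtain ⟨y, hy_adj, hy_mem⟩ : ∃ y, G.Adj l y ∧ y ∈ (p.dropUntil l hl).support.tail := by
    generalize p.dropUntil l hl = r
    cases r with
    | nil => exact absurd rfl hw
    | cons hadj r' =>
      exact ⟨_, hadj, by simpa using r'.start_mem_support⟩
  obtain ⟨x, hx_adj, hx_mem⟩ : ∃ x, G.Adj l x ∧ x ∈ (p.takeUntil l hl).reverse.support.tail := by
    generalize (p.takeUntil l hl).reverse = qr
    cases qr with
    | nil => exact absurd rfl hu
    | cons hadj q' =>
      exact ⟨_, hadj, by simpa using q'.start_mem_support⟩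
  have hx_mem' : x ∈ (p.takeUntil l hl).support := by
    have := List.tail_subset _ hx_mem
    rwa [Walk.support_reverse, List.mem_reverse] at this
  have hsup : p.support = (p.takeUntil l hl).support ++ (p.dropUntil l hl).support.tail := by
    conv_lhs => rw [← Walk.take_spec p hl]
    rw [Walk.support_append]
  have hnd : ((p.takeUntil l hl).support ++ (p.dropUntil l hl).support.tail).Nodup := by
    rw [← hsup]; exact hp.support_nodup
  have hxy : x ≠ y := fun he =>
    (List.disjoint_of_nodup_append hnd) hx_mem' (he ▸ hy_mem)
  have hx : x = a := by
    have := mem_nbrs.mpr hx_adj; rw [hnb, Finset.mem_singleton] at this; exact this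
  have hy : y = a := by
    have := mem_nbrs.mpr hy_adj; rw [hnb, Finset.mem_singleton] at this; exact this
  exact hxy (hx.trans hy.symm)

/-! ### Surgery: removing a leaf -/

lemma treeOn_eraseV {S : Finset (Fin n)} {G : SimpleGraph (Fin n)} (hT : TreeOn S G)
    {l : Fin n} (hl : l ∈ S) (hdeg : degc G l = 1) :
    TreeOn (S.erase l) (eraseV G l) := by
  refine ⟨?_, ?_, ?_⟩
  · intro v w h
    exact Finset.mem_erase.mpr ⟨h.2.1, hT.1 h.1⟩
  · intro v w hv hw
    obtain ⟨hv_ne, hvS⟩ := Finset.mem_erase.mp hv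
    obtain ⟨hw_ne, hwS⟩ := Finset.mem_erase.mp hw
    obtain ⟨p⟩ := hT.2.1 hvS hwS
    have hp := p.toPath
    exact reach_eraseV hp.val (path_avoids_leaf hT hdeg hv_ne hw_ne hp.val hp.prop)
  · intro v c hc
    exact hT.2.2 (c.mapLe eraseV_le) ((Walk.mapLe_isCycle eraseV_le).mpr hc)

lemma nbrs_eraseV {G : SimpleGraph (Fin n)} {l v : Fin n} (hv : v ≠ l) :
    nbrs (eraseV G l) v = (nbrs G v).erase l := by
  ext w
  simp only [mem_nbrs, Finset.mem_erase, eraseV_adj]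
  constructor
  · rintro ⟨h, _, hw⟩; exact ⟨hw, h⟩
  · rintro ⟨hw, h⟩; exact ⟨h, hv, hw⟩

lemma degc_eraseV_of_not_adj {G : SimpleGraph (Fin n)} {l v : Fin n} (hv : v ≠ l)
    (hna : ¬G.Adj v l) : degc (eraseV G l) v = degc G v := by
  unfold degc
  rw [nbrs_eraseV hv, Finset.erase_eq_of_notMem (by rwa [mem_nbrs])]

lemma degc_eraseV_of_adj {G : SimpleGraph (Fin n)} {l v : Fin n} (hv : v ≠ l)
    (hna : G.Adj v l) : degc (eraseV G l) v + 1 = degc G v := by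
  unfold degc
  rw [nbrs_eraseV hv, Finset.card_erase_add_one (by rwa [mem_nbrs])]

/-! ### Transferring walks into `eraseV` -/

lemma mem_support_cons_of_mem {G : SimpleGraph (Fin n)} {u b w x : Fin n}
    {h : G.Adj u b} {q : G.Walk b w} (hx : x ∈ q.support) :
    x ∈ (Walk.cons h q).support := by
  rw [Walk.support_cons]
  exact List.mem_cons_of_mem _ hx

/-- A walk avoiding `l` gives a walk in `eraseV G l`. -/
def avoidWalk {G : SimpleGraph (Fin n)} {l : Fin n} :
    ∀ {u w : Fin n} (p : G.Walk u w), (∀ x ∈ p.support, x ≠ l) → (eraseV G l).Walk u w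
  | _, _, Walk.nil, _ => Walk.nil
  | _, _, Walk.cons h q, hs =>
      Walk.cons
        (eraseV_adj.mpr
          ⟨h, hs _ (Walk.start_mem_support _), hs _ (mem_support_cons_of_mem q.start_mem_support)⟩)
        (avoidWalk q (fun x hx => hs x (mem_support_cons_of_mem hx)))

lemma support_avoidWalk {G : SimpleGraph (Fin n)} {l : Fin n} :
    ∀ {u w : Fin n} (p : G.Walk u w) (hs : ∀ x ∈ p.support, x ≠ l),
      (avoidWalk p hs).support = p.support
  | _, _, Walk.nil, _ => rfl
  | _, _, Walk.cons h q, hs => by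
      rw [avoidWalk, Walk.support_cons, Walk.support_cons, support_avoidWalk q]

lemma edges_avoidWalk {G : SimpleGraph (Fin n)} {l : Fin n} :
    ∀ {u w : Fin n} (p : G.Walk u w) (hs : ∀ x ∈ p.support, x ≠ l),
      (avoidWalk p hs).edges = p.edges
  | _, _, Walk.nil, _ => rfl
  | _, _, Walk.cons h q, hs => by
      rw [avoidWalk, Walk.edges_cons, Walk.edges_cons, edges_avoidWalk q]

lemma length_avoidWalk {G : SimpleGraph (Fin n)} {l : Fin n}
    {u w : Fin n} (p : G.Walk u w) (hs : ∀ x ∈ p.support, x ≠ l) :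
    (avoidWalk p hs).length = p.length := by
  rw [← Walk.length_edges, ← Walk.length_edges, edges_avoidWalk]

lemma isCycle_avoidWalk {G : SimpleGraph (Fin n)} {l : Fin n}
    {v : Fin n} {c : G.Walk v v} (hs : ∀ x ∈ c.support, x ≠ l) (hc : c.IsCycle) :
    (avoidWalk c hs).IsCycle := by
  rw [Walk.isCycle_def] at hc ⊢
  refine ⟨?_, ?_, ?_⟩
  · rw [Walk.isTrail_def, edges_avoidWalk]
    exact hc.1.edges_nodup
  · intro hnil
    apply hc.2.1
    have := length_avoidWalk c hs
    rw [hnil] at this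
    simp only [Walk.length_nil] at this
    exact Walk.eq_nil_iff_nil.mpr (Walk.length_eq_zero_iff.mp this.symm)
  · rw [support_avoidWalk]
    exact hc.2.2

/-! ### Surgery: adding a pendant edge -/

lemma nbrs_sup {G H : SimpleGraph (Fin n)} {v : Fin n} :
    nbrs (G ⊔ H) v = nbrs G v ∪ nbrs H v := by
  ext w; simp [mem_nbrs]

lemma nbrs_edgeG_left {l a : Fin n} (h : l ≠ a) : nbrs (edgeG l a) l = {a} := by
  ext w
  simp only [mem_nbrs, edgeG_adj, Finset.mem_singleton, Sym2.eq_iff]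
  aesop

lemma nbrs_edgeG_right {l a : Fin n} (h : l ≠ a) : nbrs (edgeG l a) a = {l} := by
  ext w
  simp only [mem_nbrs, edgeG_adj, Finset.mem_singleton, Sym2.eq_iff]
  aesop

lemma nbrs_edgeG_other {l a v : Fin n} (hvl : v ≠ l) (hva : v ≠ a) :
    nbrs (edgeG l a) v = ∅ := by
  ext w
  simp only [mem_nbrs, edgeG_adj, Finset.notMem_empty, iff_false]
  rintro ⟨h1, hne⟩
  rw [Sym2.eq_iff] at h1
  rcases h1 with ⟨rfl, rfl⟩ | ⟨rfl, rfl⟩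
  · exact hvl rfl
  · exact hva rfl

lemma nbrs_empty_of_not_mem {S : Finset (Fin n)} {G : SimpleGraph (Fin n)}
    (hE : ∀ ⦃v w⦄, G.Adj v w → v ∈ S) {l : Fin n} (hl : l ∉ S) : nbrs G l = ∅ := by
  ext w
  simp only [mem_nbrs, Finset.notMem_empty, iff_false]
  exact fun h => hl (hE h)

lemma nbrs_pendant {S : Finset (Fin n)} {G : SimpleGraph (Fin n)}
    (hE : ∀ ⦃v w⦄, G.Adj v w → v ∈ S) {l a : Fin n} (hl : l ∉ S) (hla : l ≠ a) :
    nbrs (G ⊔ edgeG l a) l = {a} := by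
  rw [nbrs_sup, nbrs_empty_of_not_mem hE hl, nbrs_edgeG_left hla, Finset.empty_union]

lemma eraseV_pendant_le {G : SimpleGraph (Fin n)} {l a : Fin n} :
    eraseV (G ⊔ edgeG l a) l ≤ G := by
  intro v w h
  obtain ⟨h1, hv, hw⟩ := eraseV_adj.mp h
  rw [sup_adj] at h1
  rcases h1 with h1 | h1
  · exact h1
  · exfalso
    obtain ⟨he, hne⟩ := edgeG_adj.mp h1
    rw [Sym2.eq_iff] at he
    rcases he with ⟨rfl, rfl⟩ | ⟨rfl, rfl⟩
    · exact hv rfl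
    · exact hw rfl

lemma treeOn_pendant {S : Finset (Fin n)} {G : SimpleGraph (Fin n)} (hT : TreeOn S G)
    {l a : Fin n} (hlS : l ∉ S) (haS : a ∈ S) :
    TreeOn (insert l S) (G ⊔ edgeG l a) := by
  have hla : l ≠ a := fun h => hlS (h ▸ haS)
  have hadj_la : (G ⊔ edgeG l a).Adj l a :=
    (sup_adj _ _ _ _).mpr (Or.inr (edgeG_adj.mpr ⟨rfl, hla⟩))
  refine ⟨?_, ?_, ?_⟩
  · intro v w h
    rw [sup_adj] at h
    rcases h with h | h
    · exact Finset.mem_insert_of_mem (hT.1 h)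
    · rw [edgeG_adj, Sym2.eq_iff] at h
      rcases h.1 with ⟨rfl, rfl⟩ | ⟨rfl, rfl⟩
      · exact Finset.mem_insert_self _ _
      · exact Finset.mem_insert_of_mem haS
  · have key : ∀ v ∈ insert l S, (G ⊔ edgeG l a).Reachable v a := by
      intro v hv
      rcases Finset.mem_insert.mp hv with rfl | hv
      · exact hadj_la.reachable
      · exact (hT.2.1 hv haS).mono le_sup_left
    intro v w hv hw
    exact (key v hv).trans (key w hw).symm
  · intro v c hc
    by_cases hmem : l ∈ c.support
    · -- rotate the cycle to start at l and derive a contradiction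
      have hc' := hc.rotate hmem
      have hnl : nbrs (G ⊔ edgeG l a) l = {a} := nbrs_pendant hT.1 hlS hla
      rcases hC : c.rotate l hmem with _ | @⟨_, b, _, hadj, q⟩
      · rw [hC] at hc'
        have := hc'.three_le_length
        simp at this
      · rw [hC] at hc'
        -- the second vertex is a
        have hb := mem_nbrs.mpr hadj
        rw [hnl, Finset.mem_singleton] at hb
        -- the last edge is also s(l, a)
        obtain ⟨htrail, hnnil, hnd⟩ := (Walk.isCycle_def _).mp hc'
        have hmem_edge : s(l, a) ∈ q.edges := by
          rcases hQ : q.reverse with _ | ⟨hadj2, q2⟩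
          · exfalso
            have : q.length = 0 := by
              have := congrArg Walk.length hQ
              simpa using this
            have h3 := hc'.three_le_length
            simp [Walk.length_cons, this] at h3
          · have hy := mem_nbrs.mpr hadj2
            rw [hnl, Finset.mem_singleton] at hy
            have : s(l, a) ∈ q.reverse.edges := by
              rw [hQ, Walk.edges_cons]
              exact List.mem_cons.mpr (Or.inl (by rw [hy]))
            rwa [Walk.edges_reverse, List.mem_reverse] at this
        rw [Walk.isTrail_def, Walk.edges_cons, List.nodup_cons] at htrail
        exact htrail.1 ((show s(l, b) = s(l, a) from by rw [hb]) ▸ hmem_edge)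
    · -- the cycle avoids l, so it lives in G
      obtain ⟨c', hc'⟩ : ∃ c' : (eraseV (G ⊔ edgeG l a) l).Walk v v, c'.IsCycle :=
        ⟨avoidWalk c (fun x hx he => hmem (by rwa [he] at hx)),
          isCycle_avoidWalk (fun x hx he => hmem (by rwa [he] at hx)) hc⟩
      exact hT.2.2 (c'.mapLe eraseV_pendant_le) ((Walk.mapLe_isCycle eraseV_pendant_le).mpr hc')

/-! ### Key reconstruction identities -/

lemma eraseV_sup_edge {S : Finset (Fin n)} {G : SimpleGraph (Fin n)} (hT : TreeOn S G)
    {l : Fin n} (hdeg : degc G l = 1) :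
    eraseV G l ⊔ edgeG l (nbr G l) = G := by
  have hla : G.Adj l (nbr G l) := adj_nbr_of_leaf hdeg
  have hnb := nbrs_of_leaf hdeg
  ext v w
  simp only [sup_adj, eraseV_adj, edgeG_adj]
  constructor
  · rintro (⟨h, _, _⟩ | ⟨he, hne⟩)
    · exact h
    · rw [Sym2.eq_iff] at he
      rcases he with ⟨rfl, rfl⟩ | ⟨rfl, rfl⟩
      · exact hla
      · exact hla.symm
  · intro h
    by_cases hv : v = l
    · subst hv
      have : w ∈ nbrs G v := mem_nbrs.mpr h
      rw [hnb, Finset.mem_singleton] at this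
      exact Or.inr ⟨by rw [Sym2.eq_iff]; exact Or.inl ⟨rfl, this⟩, h.ne⟩
    · by_cases hw : w = l
      · subst hw
        have : v ∈ nbrs G w := mem_nbrs.mpr h.symm
        rw [hnb, Finset.mem_singleton] at this
        exact Or.inr ⟨by rw [Sym2.eq_iff]; exact Or.inr ⟨this, rfl⟩, h.ne⟩
      · exact Or.inl ⟨h, hv, hw⟩

lemma eraseV_pendant {S : Finset (Fin n)} {G : SimpleGraph (Fin n)}
    (hE : ∀ ⦃v w⦄, G.Adj v w → v ∈ S) {l a : Fin n} (hl : l ∉ S) :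
    eraseV (G ⊔ edgeG l a) l = G := by
  ext v w
  simp only [eraseV_adj, sup_adj, edgeG_adj]
  constructor
  · rintro ⟨h | ⟨he, hne⟩, hv, hw⟩
    · exact h
    · rw [Sym2.eq_iff] at he
      rcases he with ⟨rfl, rfl⟩ | ⟨rfl, rfl⟩
      · exact absurd rfl hv
      · exact absurd rfl hw
  · intro h
    exact ⟨Or.inl h, fun he => hl (he ▸ hE h), fun he => hl (he ▸ hE h.symm)⟩

/-! ### Degree facts in trees -/

lemma degc_eq_one_of_card_two {S : Finset (Fin n)} {G : SimpleGraph (Fin n)}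
    (hT : TreeOn S G) (h2 : S.card = 2) {v : Fin n} (hv : v ∈ S) : degc G v = 1 := by
  have hle : degc G v ≤ 1 := by
    have hsub : nbrs G v ⊆ S.erase v := by
      intro w hw
      exact Finset.mem_erase.mpr ⟨fun he => G.irrefl (he ▸ mem_nbrs.mp hw), hT.nbrs_subset hw⟩
    calc degc G v ≤ (S.erase v).card := Finset.card_le_card hsub
      _ = 1 := by rw [Finset.card_erase_of_mem hv, h2]
  have hge : 1 ≤ degc G v := one_le_degc hT (by omega) hv
  omega

lemma two_le_degc_nbr {S : Finset (Fin n)} {G : SimpleGraph (Fin n)} (hT : TreeOn S G)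
    (h3 : 3 ≤ S.card) {l a : Fin n} (hl : degc G l = 1) (hadj : G.Adj l a) :
    2 ≤ degc G a := by
  by_contra hcon
  have haS : a ∈ S := hT.1 hadj.symm
  have hlS : l ∈ S := hT.1 hadj
  have h1 : 1 ≤ degc G a := one_le_degc hT (by omega) haS
  have ha1 : degc G a = 1 := by omega
  have hna : nbrs G a = {l} := by
    have h' := nbrs_of_leaf ha1
    have hm := mem_nbrs.mpr hadj.symm
    rw [h', Finset.mem_singleton] at hm
    rw [h', ← hm]
  have hnl : nbrs G l = {a} := by
    have h' := nbrs_of_leaf hl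
    have hm := mem_nbrs.mpr hadj
    rw [h', Finset.mem_singleton] at hm
    rw [h', ← hm]
  -- find a third vertex
  obtain ⟨w, hw⟩ : (S \ {l, a}).Nonempty := by
    rw [← Finset.card_pos]
    have hc1 := Finset.le_card_sdiff ({l, a} : Finset (Fin n)) S
    have hc2 : ({l, a} : Finset (Fin n)).card ≤ 2 := Finset.card_insert_le _ _
    omega
  rw [Finset.mem_sdiff, Finset.mem_insert, Finset.mem_singleton] at hw
  push_neg at hw
  obtain ⟨hwS, hwl, hwa⟩ := hw
  -- a path from a to w
  obtain ⟨p0⟩ := hT.2.1 haS hwS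
  have hpath := p0.toPath.prop
  rcases hP : p0.toPath.val with _ | @⟨_, b, _, h1', q⟩
  · exact hwa rfl
  · rw [hP] at hpath
    have hb : b = l := by
      have := mem_nbrs.mpr h1'
      rwa [hna, Finset.mem_singleton] at this
    rcases hQ : q with _ | @⟨_, c, _, h2', q2⟩
    · exact hwl hb
    · subst hQ
      have hc : c = a := by
        have := mem_nbrs.mpr (show G.Adj l c from hb ▸ h2')
        rwa [hnl, Finset.mem_singleton] at this
      have hnodup := hpath.support_nodup
      rw [Walk.support_cons] at hnodup
      have hmem : a ∈ (Walk.cons h2' q2).support := by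
        rw [Walk.support_cons]
        exact List.mem_cons_of_mem _ (hc ▸ q2.start_mem_support)
      exact (List.nodup_cons.mp hnodup).1 hmem

/-! ### encode equations -/

lemma encode_cons {S : Finset (Fin n)} {G : SimpleGraph (Fin n)} (hT : TreeOn S G)
    (h3 : 2 < S.card) :
    encode S G = nbr G (minLeaf S G) ::
      encode (S.erase (minLeaf S G)) (eraseV G (minLeaf S G)) := by
  rw [encode, dif_pos ⟨h3, minLeaf_mem hT (by omega)⟩]

lemma encode_nil {S : Finset (Fin n)} {G : SimpleGraph (Fin n)} (h3 : ¬2 < S.card) :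
    encode S G = [] := by
  rw [encode, dif_neg]
  exact fun h => h3 h.1

lemma minLeaf_facts {S : Finset (Fin n)} {G : SimpleGraph (Fin n)} (hT : TreeOn S G)
    (h2 : 2 ≤ S.card) :
    minLeaf S G ∈ S ∧ degc G (minLeaf S G) = 1 ∧ G.Adj (minLeaf S G) (nbr G (minLeaf S G)) :=
  ⟨minLeaf_mem hT h2, minLeaf_degc hT h2, adj_nbr_of_leaf (minLeaf_degc hT h2)⟩

lemma encode_length : ∀ (k : ℕ) (S : Finset (Fin n)) (G : SimpleGraph (Fin n)),
    S.card ≤ k → TreeOn S G → 2 ≤ S.card → (encode S G).length = S.card - 2 := by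
  intro k
  induction k with
  | zero => intro S G h _ h2; omega
  | succ k ih =>
    intro S G hk hT h2
    by_cases h3 : 2 < S.card
    · obtain ⟨hlS, hdeg, _⟩ := minLeaf_facts hT h2
      rw [encode_cons hT h3, List.length_cons,
        ih _ _ (by rw [Finset.card_erase_of_mem hlS]; omega)
          (treeOn_eraseV hT hlS hdeg) (by rw [Finset.card_erase_of_mem hlS]; omega),
        Finset.card_erase_of_mem hlS]
      omega
    · rw [encode_nil h3]
      simp
      omega

lemma encode_mem : ∀ (k : ℕ) (S : Finset (Fin n)) (G : SimpleGraph (Fin n)),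
    S.card ≤ k → TreeOn S G → ∀ x ∈ encode S G, x ∈ S := by
  intro k
  induction k with
  | zero =>
    intro S G h hT x hx
    interval_cases hc : S.card
    · rw [encode_nil (by omega)] at hx
      simp at hx
  | succ k ih =>
    intro S G hk hT x hx
    by_cases h3 : 2 < S.card
    · obtain ⟨hlS, hdeg, hadj⟩ := minLeaf_facts hT (by omega)
      rw [encode_cons hT h3, List.mem_cons] at hx
      rcases hx with rfl | hx
      · exact hT.1 hadj.symm
      · exact Finset.mem_of_mem_erase
          (ih _ _ (by rw [Finset.card_erase_of_mem hlS]; omega)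
            (treeOn_eraseV hT hlS hdeg) x hx)
    · rw [encode_nil h3] at hx
      simp at hx

lemma encode_leaf_iff : ∀ (k : ℕ) (S : Finset (Fin n)) (G : SimpleGraph (Fin n)),
    S.card ≤ k → TreeOn S G → 2 ≤ S.card →
    ∀ v ∈ S, (v ∈ encode S G ↔ degc G v ≠ 1) := by
  intro k
  induction k with
  | zero => intro S G h _ h2; omega
  | succ k ih =>
    intro S G hk hT h2 v hv
    by_cases h3 : 2 < S.card
    · obtain ⟨hlS, hdeg, hadj⟩ := minLeaf_facts hT h2
      set l := minLeaf S G with hl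
      set a := nbr G l with ha
      have hT' := treeOn_eraseV hT hlS hdeg
      have hcard' : (S.erase l).card = S.card - 1 := Finset.card_erase_of_mem hlS
      have hla : l ≠ a := hadj.ne
      rw [encode_cons hT h3, List.mem_cons]
      by_cases hvl : v = l
      · subst hvl
        constructor
        · rintro (h | h)
          · exact absurd h hla
          · exact absurd (encode_mem _ _ _ le_rfl hT' _ h) (Finset.notMem_erase _ _)
        · intro h; exact absurd hdeg h
      · by_cases hva : v = a
        · subst hva
          have h2d := two_le_degc_nbr hT (by omega) hdeg hadj
          constructor
          · intro _; omega
          · intro _; exact Or.inl rfl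
        · have hvS' : v ∈ S.erase l := Finset.mem_erase.mpr ⟨hvl, hv⟩
          have hnadj : ¬G.Adj v l := by
            intro hc
            have := mem_nbrs.mpr hc.symm
            rw [nbrs_of_leaf hdeg, Finset.mem_singleton] at this
            exact hva this
          have hdeq : degc (eraseV G l) v = degc G v :=
            degc_eraseV_of_not_adj hvl hnadj
          rw [← hdeq]
          have := ih _ _ (by omega) hT' (by omega) v hvS'
          constructor
          · rintro (h | h)
            · exact absurd h hva
            · exact this.mp h
          · intro h; exact Or.inr (this.mpr h)
    · rw [encode_nil h3]
      have hc2 : S.card = 2 := by omega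
      simp only [List.not_mem_nil, false_iff, ne_eq, not_not]
      exact degc_eq_one_of_card_two hT hc2 hv

/-! ### single edge graphs -/

lemma edgeG_isAcyclic {u v : Fin n} (h : u ≠ v) : (edgeG u v).IsAcyclic := by
  intro x c hc
  have hsub : ∀ e ∈ c.edges, e = s(u, v) := by
    intro e he
    have := c.edges_subset_edgeSet he
    rw [edgeG, edgeSet_fromEdgeSet] at this
    simpa using this.1
  have h3 := hc.three_le_length
  have hlen : c.edges.length = c.length := c.length_edges
  have hnd : c.edges.Nodup := hc.isTrail.edges_nodup
  rcases hE : c.edges with _ | ⟨e1, _ | ⟨e2, t⟩⟩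
  · rw [hE] at hlen; simp at hlen; omega
  · rw [hE] at hlen; simp at hlen; omega
  · rw [hE] at hnd
    have he1 : e1 = s(u, v) := hsub e1 (by rw [hE]; simp)
    have he2 : e2 = s(u, v) := hsub e2 (by rw [hE]; simp)
    rw [List.nodup_cons] at hnd
    exact hnd.1 (by rw [he1, he2]; simp)

lemma treeOn_single_edge {u v : Fin n} (h : u ≠ v) : TreeOn {u, v} (edgeG u v) := by
  have hadj : (edgeG u v).Adj u v := edgeG_adj.mpr ⟨rfl, h⟩
  refine ⟨?_, ?_, edgeG_isAcyclic h⟩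
  · intro x y hxy
    obtain ⟨he, _⟩ := edgeG_adj.mp hxy
    rw [Sym2.eq_iff] at he
    rcases he with ⟨rfl, rfl⟩ | ⟨rfl, rfl⟩
    · exact Finset.mem_insert_self _ _
    · exact Finset.mem_insert_of_mem (Finset.mem_singleton_self _)
  · intro x y hx hy
    rw [Finset.mem_insert, Finset.mem_singleton] at hx hy
    rcases hx with rfl | rfl <;> rcases hy with rfl | rfl
    · exact Reachable.refl _
    · exact hadj.reachable
    · exact hadj.symm.reachable
    · exact Reachable.refl _

lemma card_two_eq {S : Finset (Fin n)} (h2 : S.card = 2) :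
    fmin S ≠ fmax S ∧ S = {fmin S, fmax S} := by
  have hne : S.Nonempty := Finset.card_pos.mp (by omega)
  have hlt : S.min' hne < S.max' hne := S.min'_lt_max'_of_card (by omega)
  have h1 : fmin S ≠ fmax S := by rw [fmin_eq hne, fmax_eq hne]; exact hlt.ne
  refine ⟨h1, ?_⟩
  have hsub : ({fmin S, fmax S} : Finset (Fin n)) ⊆ S := by
    intro x hx
    rw [Finset.mem_insert, Finset.mem_singleton] at hx
    rcases hx with rfl | rfl
    · exact fmin_mem hne
    · exact fmax_mem hne
  exact (Finset.eq_of_subset_of_card_le hsub (by rw [Finset.card_pair h1]; omega)).symm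

lemma tree_card_two_eq {S : Finset (Fin n)} {G : SimpleGraph (Fin n)} (hT : TreeOn S G)
    (h2 : S.card = 2) : G = edgeG (fmin S) (fmax S) := by
  obtain ⟨hne, hSeq⟩ := card_two_eq h2
  have hSne : S.Nonempty := Finset.card_pos.mp (by omega)
  have hmin : fmin S ∈ S := fmin_mem hSne
  have hmax : fmax S ∈ S := fmax_mem hSne
  have key : ∀ x y : Fin n, x ∈ S → y ∈ S → x ≠ y → G.Adj x y := by
    intro x y hx hy hne'
    obtain ⟨p⟩ := hT.2.1 hx hy
    rcases p with _ | @⟨_, b, _, h1', q⟩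
    · exact absurd rfl hne'
    · have hbS : b ∈ S := hT.1 h1'.symm
      have hbnx : b ≠ x := h1'.ne'
      have hby : b = y := by
        rw [hSeq, Finset.mem_insert, Finset.mem_singleton] at hbS hx hy
        rcases hbS with rfl | rfl <;> rcases hx with rfl | rfl <;>
          rcases hy with rfl | rfl <;> tauto
      exact hby ▸ h1'
  have hadj : G.Adj (fmin S) (fmax S) := key _ _ hmin hmax hne
  ext x y
  rw [edgeG_adj]
  constructor
  · intro hxy
    have hx := hT.1 hxy
    have hy := hT.1 hxy.symm
    rw [hSeq, Finset.mem_insert, Finset.mem_singleton] at hx hy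
    refine ⟨?_, hxy.ne⟩
    rw [Sym2.eq_iff]
    rcases hx with rfl | rfl <;> rcases hy with rfl | rfl
    · exact absurd rfl hxy.ne
    · exact Or.inl ⟨rfl, rfl⟩
    · exact Or.inr ⟨rfl, rfl⟩
    · exact absurd rfl hxy.ne
  · rintro ⟨he, hxy⟩
    rw [Sym2.eq_iff] at he
    rcases he with ⟨rfl, rfl⟩ | ⟨rfl, rfl⟩
    · exact hadj
    · exact hadj.symm

/-! ### decode -/

lemma fmin_singleton (a : Fin n) : fmin ({a} : Finset (Fin n)) = a := by
  rw [fmin_eq (Finset.singleton_nonempty a)]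
  simp

lemma decode_spec : ∀ (s : List (Fin n)) (S : Finset (Fin n)),
    s.length + 2 = S.card → (∀ x ∈ s, x ∈ S) →
    TreeOn S (decode S s) ∧ ∀ v ∈ S, (degc (decode S s) v = 1 ↔ v ∉ s) := by
  intro s
  induction s with
  | nil =>
    intro S hlen _
    have h2 : S.card = 2 := by simpa using hlen.symm
    obtain ⟨hne, hSeq⟩ := card_two_eq h2
    have htree : TreeOn S (decode S []) := by
      show TreeOn S (edgeG (fmin S) (fmax S))
      have h0 := treeOn_single_edge hne
      rwa [← hSeq] at h0
    refine ⟨htree, ?_⟩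
    intro v hv
    simp only [List.not_mem_nil, not_false_iff, iff_true]
    exact degc_eq_one_of_card_two htree h2 hv
  | cons a rest ih =>
    intro S hlen hmem
    simp only [List.length_cons] at hlen
    set l := fmin (S \ (a :: rest).toFinset) with hl
    have hne : (S \ (a :: rest).toFinset).Nonempty := by
      rw [← Finset.card_pos]
      have hc1 := Finset.le_card_sdiff ((a :: rest).toFinset) S
      have hc2 : (a :: rest).toFinset.card ≤ rest.length + 1 := by
        have := (a :: rest).toFinset_card_le
        simpa using this
      omega
    have hlmem := fmin_mem hne
    rw [← hl, Finset.mem_sdiff, List.mem_toFinset, List.mem_cons] at hlmem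
    push_neg at hlmem
    have hlS := hlmem.1
    have hla := hlmem.2.1
    have hlrest := hlmem.2.2
    have haS : a ∈ S := hmem a (List.mem_cons_self)
    have hcard' : (S.erase l).card = rest.length + 2 := by
      rw [Finset.card_erase_of_mem hlS]; omega
    have hmem' : ∀ x ∈ rest, x ∈ S.erase l := fun x hx =>
      Finset.mem_erase.mpr ⟨fun h => hlrest (h ▸ hx), hmem x (List.mem_cons_of_mem _ hx)⟩
    obtain ⟨hT', hdeg'⟩ := ih (S.erase l) (by omega) hmem'
    have haS' : a ∈ S.erase l := Finset.mem_erase.mpr ⟨Ne.symm hla, haS⟩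
    have hlnotS' : l ∉ S.erase l := Finset.notMem_erase _ _
    have htree0 := treeOn_pendant hT' hlnotS' haS'
    rw [Finset.insert_erase hlS] at htree0
    have hdec : decode S (a :: rest) = decode (S.erase l) rest ⊔ edgeG l a := rfl
    refine ⟨by rw [hdec]; exact htree0, ?_⟩
    intro v hv
    rw [hdec]
    by_cases hvl : v = l
    · subst hvl
      have hd1 : degc (decode (S.erase l) rest ⊔ edgeG l a) l = 1 := by
        rw [degc, nbrs_pendant hT'.1 hlnotS' hla, Finset.card_singleton]
      refine iff_of_true hd1 ?_
      rw [List.mem_cons]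
      push_neg
      exact ⟨hla, hlrest⟩
    · by_cases hva : v = a
      · subst hva
        have hub : nbrs (decode (S.erase l) rest ⊔ edgeG l v) v =
            nbrs (decode (S.erase l) rest) v ∪ {l} := by
          rw [nbrs_sup, nbrs_edgeG_right hla]
        have hlnot : l ∉ nbrs (decode (S.erase l) rest) v := fun h =>
          hlnotS' (hT'.nbrs_subset h)
        have hcardd : degc (decode (S.erase l) rest ⊔ edgeG l v) v =
            degc (decode (S.erase l) rest) v + 1 := by
          rw [degc, hub, Finset.card_union_of_disjoint
            (Finset.disjoint_singleton_right.mpr hlnot), Finset.card_singleton]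
          rfl
        have h1' : 1 ≤ degc (decode (S.erase l) rest) v :=
          one_le_degc hT' (by omega) haS'
        refine iff_of_false (by rw [hcardd]; omega) ?_
        exact fun hcon => hcon (List.mem_cons_self)
      · have hvS' : v ∈ S.erase l := Finset.mem_erase.mpr ⟨hvl, hv⟩
        have heq : nbrs (decode (S.erase l) rest ⊔ edgeG l a) v =
            nbrs (decode (S.erase l) rest) v := by
          rw [nbrs_sup, nbrs_edgeG_other hvl hva, Finset.union_empty]
        rw [degc, heq, ← degc, hdeg' v hvS', List.mem_cons]
        push_neg
        constructor
        · intro h; exact ⟨hva, h⟩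
        · intro h; exact h.2

/-! ### round trips -/

lemma decode_encode : ∀ (k : ℕ) (S : Finset (Fin n)) (G : SimpleGraph (Fin n)),
    S.card ≤ k → TreeOn S G → 2 ≤ S.card → decode S (encode S G) = G := by
  intro k
  induction k with
  | zero => intro S G h _ h2; omega
  | succ k ih =>
    intro S G hk hT h2
    by_cases h3 : 2 < S.card
    · obtain ⟨hlS, hdeg, hadj⟩ := minLeaf_facts hT h2
      set l := minLeaf S G with hldef
      set a := nbr G l with hadef
      have hT' := treeOn_eraseV hT hlS hdeg
      have hEnc := encode_cons hT h3
      have hsd : S \ (encode S G).toFinset = leafSet S G := by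
        ext v
        rw [Finset.mem_sdiff, List.mem_toFinset, leafSet, Finset.mem_filter]
        constructor
        · rintro ⟨hvS, hnv⟩
          refine ⟨hvS, ?_⟩
          by_contra hne
          exact hnv ((encode_leaf_iff _ S G le_rfl hT h2 v hvS).mpr hne)
        · rintro ⟨hvS, hd⟩
          exact ⟨hvS, fun hmem =>
            (encode_leaf_iff _ S G le_rfl hT h2 v hvS).mp hmem hd⟩
      have hfm : fmin (S \ (a :: encode (S.erase l) (eraseV G l)).toFinset) = l := by
        rw [← hEnc, hsd]
        rfl
      have hcard' : (S.erase l).card = S.card - 1 := Finset.card_erase_of_mem hlS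
      rw [hEnc]
      show decode (S.erase (fmin (S \ (a :: encode (S.erase l) (eraseV G l)).toFinset)))
          (encode (S.erase l) (eraseV G l)) ⊔
        edgeG (fmin (S \ (a :: encode (S.erase l) (eraseV G l)).toFinset)) a = G
      rw [hfm, ih (S.erase l) (eraseV G l) (by omega) hT' (by omega)]
      exact eraseV_sup_edge hT hdeg
    · have h2' : S.card = 2 := by omega
      rw [encode_nil h3]
      show edgeG (fmin S) (fmax S) = G
      exact (tree_card_two_eq hT h2').symm

lemma encode_decode : ∀ (s : List (Fin n)) (S : Finset (Fin n)),
    s.length + 2 = S.card → (∀ x ∈ s, x ∈ S) → encode S (decode S s) = s := by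
  intro s
  induction s with
  | nil =>
    intro S hlen _
    exact encode_nil (by simp at hlen; omega)
  | cons a rest ih =>
    intro S hlen hmem
    simp only [List.length_cons] at hlen
    set l := fmin (S \ (a :: rest).toFinset) with hl
    have hne : (S \ (a :: rest).toFinset).Nonempty := by
      rw [← Finset.card_pos]
      have hc1 := Finset.le_card_sdiff ((a :: rest).toFinset) S
      have hc2 : (a :: rest).toFinset.card ≤ rest.length + 1 := by
        have := (a :: rest).toFinset_card_le
        simpa using this
      omega
    have hlmem := fmin_mem hne
    rw [← hl, Finset.mem_sdiff, List.mem_toFinset, List.mem_cons] at hlmem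
    push_neg at hlmem
    have hlS := hlmem.1
    have hla := hlmem.2.1
    have hlrest := hlmem.2.2
    have haS : a ∈ S := hmem a (List.mem_cons_self)
    have hcard' : (S.erase l).card = rest.length + 2 := by
      rw [Finset.card_erase_of_mem hlS]; omega
    have hmem' : ∀ x ∈ rest, x ∈ S.erase l := fun x hx =>
      Finset.mem_erase.mpr ⟨fun h => hlrest (h ▸ hx), hmem x (List.mem_cons_of_mem _ hx)⟩
    obtain ⟨hT', hdeg'⟩ := decode_spec rest (S.erase l) (by omega) hmem'
    have haS' : a ∈ S.erase l := Finset.mem_erase.mpr ⟨Ne.symm hla, haS⟩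
    have hlnotS' : l ∉ S.erase l := Finset.notMem_erase _ _
    have hdec : decode S (a :: rest) = decode (S.erase l) rest ⊔ edgeG l a := rfl
    obtain ⟨hT0, hdeg0⟩ := decode_spec (a :: rest) S (by simpa using hlen) hmem
    have hleaf : leafSet S (decode S (a :: rest)) = S \ (a :: rest).toFinset := by
      ext v
      rw [leafSet, Finset.mem_filter, Finset.mem_sdiff, List.mem_toFinset]
      constructor
      · rintro ⟨hvS, hd⟩
        exact ⟨hvS, (hdeg0 v hvS).mp hd⟩
      · rintro ⟨hvS, hnv⟩
        exact ⟨hvS, (hdeg0 v hvS).mpr hnv⟩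
    have hml : minLeaf S (decode S (a :: rest)) = l := by
      rw [minLeaf, hleaf]
    have h3 : 2 < S.card := by omega
    have hnl : nbrs (decode S (a :: rest)) l = {a} := by
      rw [hdec]
      exact nbrs_pendant hT'.1 hlnotS' hla
    have hnbr : nbr (decode S (a :: rest)) l = a := by
      rw [nbr, hnl, fmin_singleton]
    have hET : eraseV (decode S (a :: rest)) l = decode (S.erase l) rest := by
      rw [hdec]
      exact eraseV_pendant hT'.1 hlnotS'
    rw [encode_cons hT0 h3, hml, hnbr, hET, ih (S.erase l) (by omega) hmem']

/-! ### counting -/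

lemma treeOn_card (S : Finset (Fin n)) (h2 : 2 ≤ S.card) :
    Nat.card {G : SimpleGraph (Fin n) // TreeOn S G} = S.card ^ (S.card - 2) := by
  classical
  have e1 : {G : SimpleGraph (Fin n) // TreeOn S G} ≃
      {s : List (Fin n) // s.length + 2 = S.card ∧ ∀ x ∈ s, x ∈ S} :=
    { toFun := fun G => ⟨encode S G.1,
        by have := encode_length _ S G.1 le_rfl G.2 h2; omega,
        encode_mem _ S G.1 le_rfl G.2⟩
      invFun := fun s => ⟨decode S s.1, (decode_spec s.1 S s.2.1 s.2.2).1⟩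
      left_inv := fun G => Subtype.ext (decode_encode _ S G.1 le_rfl G.2 h2)
      right_inv := fun s => Subtype.ext (encode_decode s.1 S s.2.1 s.2.2) }
  have e2 : {s : List (Fin n) // s.length + 2 = S.card ∧ ∀ x ∈ s, x ∈ S} ≃
      (Fin (S.card - 2) → {x : Fin n // x ∈ S}) :=
    { toFun := fun s i => ⟨s.1[(i : ℕ)]'(by omega), s.2.2 _ (List.getElem_mem _)⟩
      invFun := fun f => ⟨List.ofFn (fun i => (f i).1),
        by
          constructor
          · rw [List.length_ofFn]; omega
          · intro x hx
            rw [List.mem_ofFn] at hx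
            obtain ⟨i, rfl⟩ := hx
            exact (f i).2⟩
      left_inv := fun s => by
        apply Subtype.ext
        apply List.ext_getElem
        · rw [List.length_ofFn]; omega
        · intro i h1 h2'
          simp [List.getElem_ofFn]
      right_inv := fun f => by
        funext i
        apply Subtype.ext
        simp [List.getElem_ofFn] }
  rw [Nat.card_congr (e1.trans e2), Nat.card_fun]
  simp [Nat.card_eq_fintype_card]

end Cayley

/-- Cayley's formula: the number of spanning trees of the complete graph on
`n ≥ 2` vertices equals `n ^ (n - 2)`. -/
theorem cayley_formula (n : ℕ) (hn : 2 ≤ n) :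
    Nat.card {H : SimpleGraph (Fin n) // H ≤ (⊤ : SimpleGraph (Fin n)) ∧ H.IsTree} =
      n ^ (n - 2) := by
  haveI : NeZero n := ⟨by omega⟩
  have e : {H : SimpleGraph (Fin n) // H ≤ (⊤ : SimpleGraph (Fin n)) ∧ H.IsTree} ≃
      {G : SimpleGraph (Fin n) // Cayley.TreeOn Finset.univ G} := by
    apply Equiv.subtypeEquivRight
    intro G
    constructor
    · rintro ⟨-, hT⟩
      exact ⟨fun v w _ => Finset.mem_univ v,
        fun v w _ _ => hT.isConnected.preconnected v w, hT.IsAcyclic⟩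
    · intro hT
      refine ⟨le_top, ?_, hT.2.2⟩
      rw [SimpleGraph.connected_iff]
      exact ⟨fun v w => hT.2.1 (Finset.mem_univ v) (Finset.mem_univ w),
        ⟨⟨0, by omega⟩⟩⟩
  have hcard : (Finset.univ : Finset (Fin n)).card = n := by simp
  rw [Nat.card_congr e, Cayley.treeOn_card Finset.univ (by rw [hcard]; omega), hcard]
end

section
/- Cayley's formula for bipartite graphs: the number of spanning trees of the complete bipartite graph K_{n,m} with parts of sizes n ≥ 1 and m ≥ 1 equals n^{m−1} · m^{n−1}. -/
open SimpleGraph Function Set Sum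
open scoped Classical

namespace CayleyBip


variable {V : Type*} {K : SimpleGraph V} {r : V} {p : V → V}

/-- A rooted parent map for base graph `K` and root `r`. -/
def IsRootedMap (K : SimpleGraph V) (r : V) (p : V → V) : Prop :=
  (∀ v, v ≠ r → K.Adj v (p v)) ∧ p r = r ∧ ∀ v, ∃ k, p^[k] v = r

theorem IsRootedMap.ne_self (hp : IsRootedMap K r p) {v : V} (hv : v ≠ r) : v ≠ p v :=
  (hp.1 v hv).ne

theorem IsRootedMap.iterate_root (hp : IsRootedMap K r p) (k : ℕ) : p^[k] r = r :=
  Function.iterate_fixed hp.2.1 k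

/-- If an iterate of `p` returns to `v` (with positive exponent), then `v = r`. -/
theorem IsRootedMap.eq_root_of_periodic (hp : IsRootedMap K r p) {v : V} {c : ℕ}
    (hc : 0 < c) (h : p^[c] v = v) : v = r := by
  obtain ⟨k, hk⟩ := hp.2.2 v
  have hcyc : ∀ N, p^[c * N] v = v := by
    intro N
    induction N with
    | zero => simp
    | succ N ih => rw [Nat.mul_succ, Function.iterate_add_apply, h]; exact ih
  have h1 : p^[c * (k + 1)] v = v := hcyc (k + 1)
  have hle : k + 1 ≤ c * (k + 1) := Nat.le_mul_of_pos_left (k + 1) hc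
  have h2 : c * (k + 1) = (c * (k + 1) - k) + k := by omega
  rw [h2, Function.iterate_add_apply, hk, hp.iterate_root] at h1
  exact h1.symm

/-- The graph of a parent map: edges `{v, p v}` for `v ≠ r`. -/
def treeGraph (r : V) (p : V → V) : SimpleGraph V where
  Adj a b := a ≠ b ∧ ((a ≠ r ∧ b = p a) ∨ (b ≠ r ∧ a = p b))
  symm := by
    refine ⟨?_⟩; rintro a b ⟨hne, h | h⟩
    · exact ⟨hne.symm, Or.inr h⟩
    · exact ⟨hne.symm, Or.inl h⟩
  loopless := ⟨by rintro a ⟨hne, -⟩; exact hne rfl⟩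

theorem treeGraph_adj {a b : V} :
    (treeGraph r p).Adj a b ↔ a ≠ b ∧ ((a ≠ r ∧ b = p a) ∨ (b ≠ r ∧ a = p b)) := Iff.rfl

theorem IsRootedMap.treeGraph_adj_parent (hp : IsRootedMap K r p) {v : V} (hv : v ≠ r) :
    (treeGraph r p).Adj v (p v) :=
  ⟨hp.ne_self hv, Or.inl ⟨hv, rfl⟩⟩

theorem IsRootedMap.treeGraph_le (hp : IsRootedMap K r p) : treeGraph r p ≤ K := by
  rintro a b ⟨hne, ⟨ha, rfl⟩ | ⟨hb, rfl⟩⟩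
  · exact hp.1 a ha
  · exact (hp.1 b hb).symm

/-- Height of a vertex: number of steps to reach the root. -/
noncomputable def rheight (hp : IsRootedMap K r p) (v : V) : ℕ := Nat.find (hp.2.2 v)

theorem rheight_spec (hp : IsRootedMap K r p) (v : V) : p^[rheight hp v] v = r :=
  Nat.find_spec (hp.2.2 v)

theorem rheight_pos (hp : IsRootedMap K r p) {v : V} (hv : v ≠ r) : 0 < rheight hp v := by
  rcases Nat.eq_zero_or_pos (rheight hp v) with h | h
  · exfalso; apply hv; have := rheight_spec hp v; rwa [h] at this
  · exact h

theorem rheight_parent (hp : IsRootedMap K r p) {v : V} (hv : v ≠ r) :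
    rheight hp (p v) < rheight hp v := by
  have hpos := rheight_pos hp hv
  have hspec := rheight_spec hp v
  have hh : p^[rheight hp v - 1] (p v) = r := by
    have h2 : rheight hp v = rheight hp v - 1 + 1 := by omega
    rw [h2, Function.iterate_succ_apply] at hspec
    exact hspec
  have h3 : rheight hp (p v) ≤ rheight hp v - 1 := Nat.find_le hh
  omega

theorem IsRootedMap.reachable_root (hp : IsRootedMap K r p) (v : V) :
    (treeGraph r p).Reachable v r := by
  by_cases hv : v = r
  · exact hv ▸ Reachable.refl v
  · have hlt := rheight_parent hp hv
    have h1 : (treeGraph r p).Reachable (p v) r := hp.reachable_root (p v)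
    exact ((hp.treeGraph_adj_parent hv).reachable).trans h1
termination_by rheight hp v
decreasing_by exact hlt

theorem IsRootedMap.treeGraph_connected (hp : IsRootedMap K r p) :
    (treeGraph r p).Connected := by
  haveI : Nonempty V := ⟨r⟩
  exact Connected.mk fun a b => (hp.reachable_root a).trans (hp.reachable_root b).symm

/-- Every walk from a vertex whose orbit passes through `v`, to `p v`,
must use the edge `{v, p v}`. -/
theorem IsRootedMap.walk_mem_edges_aux (hp : IsRootedMap K r p) {v : V} (hv : v ≠ r) :
    ∀ {x y : V} (w : (treeGraph r p).Walk x y), (∃ j, p^[j] x = v) →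
      (¬ ∃ j, p^[j] y = v) → s(v, p v) ∈ w.edges := by
  intro x y w
  induction w with
  | nil =>
    intro hx hy
    exact absurd hx hy
  | @cons a b c hab w ih =>
    intro hhx hhy
    revert hhx
    have ih := fun h => ih h hhy
    rintro ⟨j, hj⟩
    by_cases he : s(a, b) = s(v, p v)
    · rw [Walk.edges_cons, he]; exact List.mem_cons_self
    · rw [Walk.edges_cons]
      refine List.mem_cons_of_mem _ (ih ?_)
      obtain ⟨hne, ⟨ha, rfl⟩ | ⟨hb, rfl⟩⟩ := hab
      · rcases Nat.eq_zero_or_pos j with rfl | hjpos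
        · simp only [Function.iterate_zero_apply] at hj
          exact absurd (by rw [hj]) he
        · refine ⟨j - 1, ?_⟩
          have h2 : j = j - 1 + 1 := by omega
          rw [h2, Function.iterate_succ_apply] at hj
          exact hj
      · exact ⟨j + 1, by rw [Function.iterate_succ_apply, hj]⟩

theorem IsRootedMap.treeGraph_isAcyclic (hp : IsRootedMap K r p) :
    (treeGraph r p).IsAcyclic := by
  rw [isAcyclic_iff_forall_adj_isBridge]
  have key : ∀ v : V, v ≠ r → (treeGraph r p).IsBridge s(v, p v) := by
    intro v hvr
    rw [isBridge_iff_adj_and_forall_walk_mem_edges]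
    refine fun w => hp.walk_mem_edges_aux hvr w ⟨0, rfl⟩ ?_
    rintro ⟨j, hj⟩
    have hper : p^[j + 1] v = v := by rw [Function.iterate_succ_apply]; exact hj
    exact hvr (hp.eq_root_of_periodic (Nat.succ_pos j) hper)
  rintro a b ⟨hne, ⟨ha, rfl⟩ | ⟨hb, rfl⟩⟩
  · exact key a ha
  · rw [Sym2.eq_swap]; exact key b hb

theorem IsRootedMap.treeGraph_isTree (hp : IsRootedMap K r p) :
    (treeGraph r p).IsTree :=
  ⟨hp.treeGraph_connected, hp.treeGraph_isAcyclic⟩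

/-- There is a path from `v` to `r` in `treeGraph` whose second vertex is `p v`. -/
theorem IsRootedMap.exists_good_path (hp : IsRootedMap K r p) (v : V) :
    ∃ w : (treeGraph r p).Walk v r, w.IsPath ∧
      (∀ x ∈ w.support, rheight hp x ≤ rheight hp v) ∧ (v ≠ r → w.getVert 1 = p v) := by
  by_cases hv : v = r
  · subst hv
    exact ⟨Walk.nil, Walk.IsPath.nil, by simp, by simp⟩
  · have hlt := rheight_parent hp hv
    obtain ⟨w', hw'path, hw'supp, -⟩ := hp.exists_good_path (p v)
    refine ⟨Walk.cons (hp.treeGraph_adj_parent hv) w', ?_, ?_, ?_⟩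
    · rw [Walk.cons_isPath_iff]
      refine ⟨hw'path, fun hmem => ?_⟩
      have := hw'supp v hmem
      omega
    · intro x hx
      rw [Walk.support_cons, List.mem_cons] at hx
      rcases hx with rfl | hx
      · exact le_refl _
      · exact le_of_lt (lt_of_le_of_lt (hw'supp x hx) hlt)
    · intro _
      exact Walk.snd_cons _ _
termination_by rheight hp v
decreasing_by exact hlt

/-- Extraction of the parent map from a graph, independently of any proofs. -/
noncomputable def extractParent (G : SimpleGraph V) (r v : V) : V :=
  if h : ∃ w : G.Walk v r, w.IsPath then h.choose.getVert 1 else v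

theorem IsRootedMap.extractParent_treeGraph (hp : IsRootedMap K r p) :
    extractParent (treeGraph r p) r = p := by
  funext v
  obtain ⟨w, hwpath, -, hsnd⟩ := hp.exists_good_path v
  have hex : ∃ w : (treeGraph r p).Walk v r, w.IsPath := ⟨w, hwpath⟩
  rw [extractParent, dif_pos hex]
  obtain ⟨w', -, hwu⟩ := hp.treeGraph_isTree.existsUnique_path v r
  have h1 : hex.choose = w' := hwu _ hex.choose_spec
  have h2 : w = w' := hwu _ hwpath
  rw [h1, ← h2]
  by_cases hv : v = r
  · subst hv
    have : w = Walk.nil := Walk.isPath_iff_eq_nil.mp hwpath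
    rw [this, hp.2.1]
    rfl
  · exact hsnd hv

/-- The tree graph construction is injective on rooted maps. -/
theorem treeGraph_injective {q : V → V} (hp : IsRootedMap K r p) (hq : IsRootedMap K r q)
    (h : treeGraph r p = treeGraph r q) : p = q := by
  rw [← hp.extractParent_treeGraph, ← hq.extractParent_treeGraph, h]

/-- Surjectivity: every spanning tree of `K` comes from a rooted map. -/
theorem treeGraph_surjective {H : SimpleGraph V} (hK : H ≤ K) (hT : H.IsTree) (r : V) :
    ∃ q : V → V, IsRootedMap K r q ∧ treeGraph r q = H := by
  classical
  have hex : ∀ v : V, ∃ w : H.Walk v r, w.IsPath := by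
    intro v
    obtain ⟨w⟩ := hT.isConnected.preconnected v r
    exact ⟨w.toPath.1, w.toPath.2⟩
  have huniq : ∀ {v : V} (w w' : H.Walk v r), w.IsPath → w'.IsPath → w = w' := by
    intro v w w' hw hw'
    obtain ⟨w'', -, hu⟩ := hT.existsUnique_path v r
    rw [hu _ hw, hu _ hw']
  set q : V → V := extractParent H r with hqdef
  have hq_eq : ∀ v : V, q v = (hex v).choose.getVert 1 := by
    intro v
    rw [hqdef, extractParent, dif_pos (hex v)]
  -- basic facts about the chosen paths
  have hchoose_nil : (hex r).choose = Walk.nil := by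
    have := (hex r).choose_spec
    exact Walk.isPath_iff_eq_nil.mp this
  have hqr : q r = r := by
    rw [hq_eq, hchoose_nil]; rfl
  have hadjq : ∀ v : V, v ≠ r → H.Adj v (q v) := by
    intro v hv
    rw [hq_eq]
    exact Walk.adj_snd (Walk.not_nil_of_ne hv)
  -- the chosen path from (q v) is the tail of the chosen path from v
  have htail : ∀ v : V, v ≠ r →
      ((hex v).choose.length = (hex (q v)).choose.length + 1) := by
    intro v hv
    have hnil : ¬(hex v).choose.Nil := Walk.not_nil_of_ne hv
    have h1 : ((hex v).choose.tail).IsPath := ((hex v).choose_spec).tail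
    have hcast : (hex v).choose.getVert 1 = q v := (hq_eq v).symm
    have h2 := huniq (((hex v).choose.tail).copy hcast rfl) (hex (q v)).choose
      (by simpa using h1) (hex (q v)).choose_spec
    have h3 : (hex (q v)).choose.length = (hex v).choose.tail.length := by
      rw [← h2]; simp
    have h4 := Walk.length_tail_add_one hnil
    omega
  have hreach : ∀ v : V, ∃ k, q^[k] v = r := by
    intro v
    generalize hN : (hex v).choose.length = N
    induction N using Nat.strong_induction_on generalizing v with
    | _ N ih =>
      by_cases hv : v = r
      · exact ⟨0, hv⟩
      · have hlen := htail v hv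
        obtain ⟨k, hk⟩ := ih ((hex (q v)).choose.length) (by omega) (q v) rfl
        exact ⟨k + 1, by rw [Function.iterate_succ_apply, hk]⟩
  have hrm : IsRootedMap K r q := ⟨fun v hv => hK (hadjq v hv), hqr, hreach⟩
  refine ⟨q, hrm, ?_⟩
  ext a b
  constructor
  · rintro ⟨hne, ⟨ha, rfl⟩ | ⟨hb, rfl⟩⟩
    · exact hadjq a ha
    · exact (hadjq b hb).symm
  · intro hadj
    set Q := (hex b).choose with hQ
    have hQpath : Q.IsPath := (hex b).choose_spec
    by_cases hmem : a ∈ Q.support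
    · -- q b = a
      have hbner : b ≠ r := by
        rintro rfl
        rw [hQ, hchoose_nil] at hmem
        simp only [Walk.support_nil, List.mem_singleton] at hmem
        exact hadj.ne (hmem ▸ rfl)
      have htake : (Q.takeUntil a hmem).IsPath := hQpath.takeUntil hmem
      have hsingle : Q.takeUntil a hmem = Walk.cons hadj.symm Walk.nil := by
        have := hT.IsAcyclic.path_unique ⟨Q.takeUntil a hmem, htake⟩
          ⟨Walk.cons hadj.symm Walk.nil, by simp [Walk.isPath_def, hadj.ne']⟩
        exact congrArg Subtype.val this
      have hspec := Q.take_spec hmem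
      rw [hsingle, Walk.cons_append, Walk.nil_append] at hspec
      have : q b = a := by
        rw [hq_eq, ← hQ, ← hspec, Walk.getVert_cons_succ, Walk.getVert_zero]
      exact ⟨hadj.ne, Or.inr ⟨hbner, this.symm⟩⟩
    · -- q a = b
      have haner : a ≠ r := by
        rintro rfl
        exact hmem Q.end_mem_support
      have hconspath : (Walk.cons hadj Q).IsPath := by
        rw [Walk.cons_isPath_iff]; exact ⟨hQpath, hmem⟩
      have heq : (hex a).choose = Walk.cons hadj Q := huniq _ _ (hex a).choose_spec hconspath
      have : q a = b := by
        rw [hq_eq, heq, Walk.getVert_cons_succ, Walk.getVert_zero]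
      exact ⟨hadj.ne, Or.inl ⟨haner, this.symm⟩⟩

/-- Part A: the number of rooted maps equals the number of spanning trees. -/
theorem card_rootedMap_eq_card_trees (K : SimpleGraph V) (r : V) :
    Nat.card {p : V → V // IsRootedMap K r p} =
      Nat.card {H : SimpleGraph V // H ≤ K ∧ H.IsTree} := by
  apply Nat.card_eq_of_bijective
    (fun x => ⟨treeGraph r x.1, x.2.treeGraph_le, x.2.treeGraph_isTree⟩)
  constructor
  · rintro ⟨p, hp⟩ ⟨q, hq⟩ h
    simp only [Subtype.mk.injEq] at h ⊢
    exact treeGraph_injective hp hq h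
  · rintro ⟨H, hK, hT⟩
    obtain ⟨q, hq, hqH⟩ := treeGraph_surjective hK hT r
    exact ⟨⟨q, hq⟩, by simp only [Subtype.mk.injEq]; exact hqH⟩



/-- On a finite type, some iterate of any point is periodic. -/
theorem exists_iterate_mem_periodicPts {α : Type*} [Finite α] (F : α → α) (v : α) :
    ∃ j, F^[j] v ∈ periodicPts F := by
  obtain ⟨i, j, hij, hne⟩ : ∃ i j : ℕ, F^[i] v = F^[j] v ∧ i ≠ j := by
    obtain ⟨i, j, hne, h⟩ := Finite.exists_ne_map_eq_of_infinite (fun j : ℕ => F^[j] v)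
    exact ⟨i, j, h, hne⟩
  wlog h : i < j generalizing i j
  · exact this j i hij.symm hne.symm (by omega)
  refine ⟨i, mk_mem_periodicPts (n := j - i) (by omega) ?_⟩
  show F^[j - i] (F^[i] v) = F^[i] v
  rw [← Function.iterate_add_apply]
  have : j - i + i = j := by omega
  rw [this, ← hij]

/-- cancellation of iterates within an invariant set on which `F` is injective. -/
theorem iterate_cancel_of_injOn {α : Type*} {F : α → α} {s : Set α}
    (hmap : MapsTo F s s) (hinj : InjOn F s) :
    ∀ (i : ℕ) {a b : α}, a ∈ s → b ∈ s → F^[i] a = F^[i] b → a = b := by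
  intro i
  induction i with
  | zero => intro a b _ _ h; simpa using h
  | succ i ih =>
    intro a b ha hb h
    rw [Function.iterate_succ_apply, Function.iterate_succ_apply] at h
    exact hinj ha hb (ih (hmap ha) (hmap hb) h)

/-- Every point of a finite set mapped onto itself is periodic. -/
theorem mem_periodicPts_of_surjOn {α : Type*} {F : α → α} {s : Set α} (hfin : s.Finite)
    (hmap : MapsTo F s s) (hsurj : SurjOn F s s) : ∀ x ∈ s, x ∈ periodicPts F := by
  have hbij : BijOn F s s := hfin.surjOn_iff_bijOn_of_mapsTo hmap |>.mp hsurj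
  haveI := hfin.to_subtype
  intro x hx
  have hiter : ∀ i, F^[i] x ∈ s := by
    intro i
    induction i with
    | zero => exact hx
    | succ i ih => rw [Function.iterate_succ_apply']; exact hmap ih
  obtain ⟨i, j, hne, h⟩ := Finite.exists_ne_map_eq_of_infinite
    (fun j : ℕ => (⟨F^[j] x, hiter j⟩ : s))
  simp only [Subtype.mk.injEq] at h
  wlog hij : i < j generalizing i j
  · exact this j i hne.symm h.symm (by omega)
  refine mk_mem_periodicPts (n := j - i) (by omega) ?_
  have key : F^[i] (F^[j - i] x) = F^[i] x := by
    rw [← Function.iterate_add_apply]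
    have : i + (j - i) = j := by omega
    rw [this, h]
  exact iterate_cancel_of_injOn hbij.mapsTo hbij.injOn i (hiter _) hx key

/-- cyclic successor on `Fin K`. -/
def cshift {K : ℕ} (i : Fin K) : Fin K :=
  if h : i.val = K - 1 then ⟨0, by have := i.isLt; omega⟩
  else ⟨i.val + 1, by have := i.isLt; omega⟩

/-- cyclic predecessor on `Fin K`. -/
def cpshift {K : ℕ} (i : Fin K) : Fin K :=
  if i.val = 0 then ⟨K - 1, by have := i.isLt; omega⟩
  else ⟨i.val - 1, by have := i.isLt; omega⟩

theorem cshift_val {K : ℕ} (i : Fin K) :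
    (cshift i).val = if i.val = K - 1 then 0 else i.val + 1 := by
  simp only [cshift]
  split_ifs <;> rfl

theorem cpshift_val {K : ℕ} (i : Fin K) :
    (cpshift i).val = if i.val = 0 then K - 1 else i.val - 1 := by
  simp only [cpshift]
  split_ifs <;> rfl

theorem cshift_cpshift {K : ℕ} (i : Fin K) : cshift (cpshift i) = i := by
  have hK : i.val < K := i.isLt
  apply Fin.ext
  simp only [cshift_val, cpshift_val]
  split_ifs <;> first | omega | simp_all

theorem cpshift_cshift {K : ℕ} (i : Fin K) : cpshift (cshift i) = i := by
  have hK : i.val < K := i.isLt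
  apply Fin.ext
  simp only [cpshift_val, cshift_val]
  split_ifs <;> first | omega | simp_all

theorem cpshift_zero {K : ℕ} (h : 0 < K) :
    cpshift (⟨0, h⟩ : Fin K) = ⟨K - 1, by omega⟩ := by
  apply Fin.ext
  simp [cpshift_val]

/-- the sorted enumerations of equal finsets agree. -/
theorem orderIsoOfFin_congr {α : Type*} [LinearOrder α] {s t : Finset α} (hst : s = t)
    {k1 k2 : ℕ} (h1 : s.card = k1) (h2 : t.card = k2) (i : Fin k1) (hk : i.val < k2) :
    ((s.orderIsoOfFin h1 i : α)) = (t.orderIsoOfFin h2 ⟨i.val, hk⟩ : α) := by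
  subst hst
  obtain rfl : k1 = k2 := by omega
  rfl



section B2

variable {n m : ℕ}

/-- The functional digraph map of a pair of functions. -/
def FF (f : Fin n → Fin m) (g : Fin m → Fin n) : Fin n ⊕ Fin m → Fin n ⊕ Fin m :=
  Sum.elim (fun a => Sum.inr (f a)) (fun b => Sum.inl (g b))

variable {f : Fin n → Fin m} {g : Fin m → Fin n}

@[simp] theorem FF_inl {a : Fin n} : FF f g (inl a) = inr (f a) := rfl
@[simp] theorem FF_inr {b : Fin m} : FF f g (inr b) = inl (g b) := rfl

/-- A-side periodic points. -/
noncomputable def ZA (f : Fin n → Fin m) (g : Fin m → Fin n) : Finset (Fin n) :=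
  Finset.univ.filter fun a => inl a ∈ periodicPts (FF f g)

/-- B-side periodic points. -/
noncomputable def ZB (f : Fin n → Fin m) (g : Fin m → Fin n) : Finset (Fin m) :=
  Finset.univ.filter fun b => inr b ∈ periodicPts (FF f g)

theorem mem_ZA_iff {a : Fin n} : a ∈ ZA f g ↔ inl a ∈ periodicPts (FF f g) := by
  simp [ZA]

theorem mem_ZB_iff {b : Fin m} : b ∈ ZB f g ↔ inr b ∈ periodicPts (FF f g) := by
  simp [ZB]

theorem f_mem_ZB {a : Fin n} (ha : a ∈ ZA f g) : f a ∈ ZB f g := by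
  rw [mem_ZB_iff]
  have := (Function.bijOn_periodicPts (FF f g)).mapsTo (mem_ZA_iff.mp ha)
  simpa using this

theorem g_mem_ZA {b : Fin m} (hb : b ∈ ZB f g) : g b ∈ ZA f g := by
  rw [mem_ZA_iff]
  have := (Function.bijOn_periodicPts (FF f g)).mapsTo (mem_ZB_iff.mp hb)
  simpa using this

theorem f_injOn {a a' : Fin n} (ha : a ∈ ZA f g) (ha' : a' ∈ ZA f g) (h : f a = f a') :
    a = a' := by
  have := (Function.bijOn_periodicPts (FF f g)).injOn (mem_ZA_iff.mp ha) (mem_ZA_iff.mp ha')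
    (by simp [h])
  simpa using this

theorem g_injOn {b b' : Fin m} (hb : b ∈ ZB f g) (hb' : b' ∈ ZB f g) (h : g b = g b') :
    b = b' := by
  have := (Function.bijOn_periodicPts (FF f g)).injOn (mem_ZB_iff.mp hb) (mem_ZB_iff.mp hb')
    (by simp [h])
  simpa using this

theorem f_surjOn {b : Fin m} (hb : b ∈ ZB f g) : ∃ a ∈ ZA f g, f a = b := by
  obtain ⟨v, hv, hFv⟩ := (Function.bijOn_periodicPts (FF f g)).surjOn (mem_ZB_iff.mp hb)
  cases v with
  | inl a =>
    refine ⟨a, mem_ZA_iff.mpr hv, ?_⟩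
    simpa using hFv
  | inr b' => simp at hFv

theorem g_surjOn {a : Fin n} (ha : a ∈ ZA f g) : ∃ b ∈ ZB f g, g b = a := by
  obtain ⟨v, hv, hFv⟩ := (Function.bijOn_periodicPts (FF f g)).surjOn (mem_ZA_iff.mp ha)
  cases v with
  | inl a' => simp at hFv
  | inr b =>
    refine ⟨b, mem_ZB_iff.mpr hv, ?_⟩
    simpa using hFv

theorem ZA_nonempty (hn : 0 < n) (f : Fin n → Fin m) (g : Fin m → Fin n) :
    (ZA f g).Nonempty := by
  obtain ⟨j, hj⟩ := exists_iterate_mem_periodicPts (FF f g) (inl ⟨0, hn⟩)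
  set v := (FF f g)^[j] (inl ⟨0, hn⟩) with hv
  clear_value v
  cases v with
  | inl a => exact ⟨a, mem_ZA_iff.mpr hj⟩
  | inr b => exact ⟨g b, g_mem_ZA (mem_ZB_iff.mpr hj)⟩

/-- The number of A-side periodic points. -/
noncomputable def kk (f : Fin n → Fin m) (g : Fin m → Fin n) : ℕ := (ZA f g).card

theorem kk_pos (hn : 0 < n) (f : Fin n → Fin m) (g : Fin m → Fin n) : 0 < kk f g :=
  Finset.card_pos.mpr (ZA_nonempty hn f g)

/-- Sorted enumeration of `ZA`. -/
noncomputable def eZ (f : Fin n → Fin m) (g : Fin m → Fin n) :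
    Fin (kk f g) ≃o {x // x ∈ ZA f g} := (ZA f g).orderIsoOfFin rfl

/-- The `y` sequence: image of the sorted enumeration under `f`. -/
noncomputable def ww (f : Fin n → Fin m) (g : Fin m → Fin n) (i : Fin (kk f g)) : Fin m :=
  f (eZ f g i)

/-- The `x` sequence (path order on the A side). -/
noncomputable def uu (f : Fin n → Fin m) (g : Fin m → Fin n) (i : Fin (kk f g)) : Fin n :=
  g (ww f g (cpshift i))

theorem ww_mem (i : Fin (kk f g)) : ww f g i ∈ ZB f g := f_mem_ZB (eZ f g i).2

theorem ww_inj : Function.Injective (ww f g) := by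
  intro i j h
  have := f_injOn (eZ f g i).2 (eZ f g j).2 h
  exact (eZ f g).injective (Subtype.ext this)

theorem ww_surj {b : Fin m} (hb : b ∈ ZB f g) : ∃ i, ww f g i = b := by
  obtain ⟨a, ha, hab⟩ := f_surjOn hb
  exact ⟨(eZ f g).symm ⟨a, ha⟩, by simp [ww, hab]⟩

theorem uu_mem (i : Fin (kk f g)) : uu f g i ∈ ZA f g := g_mem_ZA (ww_mem _)

theorem uu_inj : Function.Injective (uu f g) := by
  intro i j h
  have h2 := g_injOn (ww_mem (cpshift i)) (ww_mem (cpshift j)) h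
  have h3 := ww_inj h2
  have := congrArg cshift h3
  rwa [cshift_cpshift, cshift_cpshift] at this

theorem uu_surj {a : Fin n} (ha : a ∈ ZA f g) : ∃ i, uu f g i = a := by
  obtain ⟨b, hb, hba⟩ := g_surjOn ha
  obtain ⟨j, hj⟩ := ww_surj hb
  refine ⟨cshift j, ?_⟩
  rw [uu, cpshift_cshift, hj, hba]

/-- Path-order enumeration of `ZA` as an equivalence. -/
noncomputable def uEq (f : Fin n → Fin m) (g : Fin m → Fin n) :
    Fin (kk f g) ≃ {x // x ∈ ZA f g} :=
  Equiv.ofBijective (fun i => ⟨uu f g i, uu_mem i⟩)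
    ⟨fun i j h => uu_inj (congrArg Subtype.val h),
     fun ⟨a, ha⟩ => by obtain ⟨i, hi⟩ := uu_surj ha; exact ⟨i, Subtype.ext hi⟩⟩

/-- The last index. -/
noncomputable def lastI (hn : 0 < n) (f : Fin n → Fin m) (g : Fin m → Fin n) : Fin (kk f g) :=
  ⟨kk f g - 1, by have := kk_pos hn f g; omega⟩

/-- The root. -/
noncomputable def b0 (hn : 0 < n) (f : Fin n → Fin m) (g : Fin m → Fin n) : Fin m :=
  ww f g (lastI hn f g)

theorem b0_mem (hn : 0 < n) : b0 hn f g ∈ ZB f g := ww_mem _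

theorem ww_eq_b0_iff (hn : 0 < n) {i : Fin (kk f g)} :
    ww f g i = b0 hn f g ↔ i = lastI hn f g := ww_inj.eq_iff

/-- The rooted tree map built out of `(f, g)`. -/
noncomputable def pmap (hn : 0 < n) (f : Fin n → Fin m) (g : Fin m → Fin n) :
    Fin n ⊕ Fin m → Fin n ⊕ Fin m :=
  Sum.elim
    (fun a => if ha : a ∈ ZA f g then inr (ww f g ((uEq f g).symm ⟨a, ha⟩)) else inr (f a))
    (fun b => if b = b0 hn f g then inr (b0 hn f g) else inl (g b))

theorem pmap_inl_mem (hn : 0 < n) (i : Fin (kk f g)) :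
    pmap hn f g (inl (uu f g i)) = inr (ww f g i) := by
  have hmem := uu_mem (f := f) (g := g) i
  simp only [pmap, Sum.elim_inl, dif_pos hmem]
  congr 1
  congr 1
  exact (Equiv.symm_apply_eq _).mpr (Subtype.ext rfl)

theorem pmap_inl_nonmem (hn : 0 < n) {a : Fin n} (ha : a ∉ ZA f g) :
    pmap hn f g (inl a) = inr (f a) := by
  simp only [pmap, Sum.elim_inl, dif_neg ha]

theorem pmap_root (hn : 0 < n) : pmap hn f g (inr (b0 hn f g)) = inr (b0 hn f g) := by
  simp [pmap]

theorem pmap_inr_ne (hn : 0 < n) {b : Fin m} (hb : b ≠ b0 hn f g) :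
    pmap hn f g (inr b) = inl (g b) := by
  simp only [pmap, Sum.elim_inr, if_neg hb]

theorem pmap_inr_w (hn : 0 < n) {i : Fin (kk f g)} (hi : i ≠ lastI hn f g) :
    pmap hn f g (inr (ww f g i)) = inl (uu f g (cshift i)) := by
  rw [pmap_inr_ne hn (fun h => hi ((ww_eq_b0_iff hn).mp h))]
  congr 1
  rw [uu, cpshift_cshift]

/-- The orbit of the start vertex under `pmap` follows the path order. -/
theorem pmap_orbit (hn : 0 < n) (f : Fin n → Fin m) (g : Fin m → Fin n) :
    ∀ j (hj : j < kk f g),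
      (pmap hn f g)^[2 * j] (inl (uu f g ⟨0, kk_pos hn f g⟩)) = inl (uu f g ⟨j, hj⟩) ∧
      (pmap hn f g)^[2 * j + 1] (inl (uu f g ⟨0, kk_pos hn f g⟩)) = inr (ww f g ⟨j, hj⟩) := by
  intro j
  induction j with
  | zero =>
    intro hj
    have h0 : 2 * 0 = 0 := rfl
    constructor
    · rw [h0, Function.iterate_zero_apply]
    · rw [h0]
      have h1 : (0 : ℕ) + 1 = 1 := rfl
      rw [h1, Function.iterate_one]
      exact pmap_inl_mem hn ⟨0, kk_pos hn f g⟩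
  | succ j ih =>
    intro hj
    have hjlt : j < kk f g := by omega
    obtain ⟨ih1, ih2⟩ := ih hjlt
    have hjne : (⟨j, hjlt⟩ : Fin (kk f g)) ≠ lastI hn f g := by
      intro h
      have := congrArg Fin.val h
      simp only [lastI] at this
      omega
    have hshift : cshift (⟨j, hjlt⟩ : Fin (kk f g)) = ⟨j + 1, hj⟩ := by
      apply Fin.ext
      rw [cshift_val]
      simp only [lastI]
      have : j ≠ kk f g - 1 := by omega
      rw [if_neg this]
    have step1 : (pmap hn f g)^[2 * (j + 1)] (inl (uu f g ⟨0, kk_pos hn f g⟩)) =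
        inl (uu f g ⟨j + 1, hj⟩) := by
      have h2 : 2 * (j + 1) = (2 * j + 1) + 1 := by omega
      rw [h2, Function.iterate_succ_apply', ih2, pmap_inr_w hn hjne, hshift]
    refine ⟨step1, ?_⟩
    rw [Function.iterate_succ_apply', step1, pmap_inl_mem hn]

end B2

section B3

variable {n m : ℕ} {f : Fin n → Fin m} {g : Fin m → Fin n}

/-- From a B-side path point, the root is reached. -/
theorem reach_from_w (hn : 0 < n) (f : Fin n → Fin m) (g : Fin m → Fin n) :
    ∀ (d : ℕ) (i : Fin (kk f g)), kk f g - 1 - i.val = d →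
      ∃ jj, (pmap hn f g)^[jj] (inr (ww f g i)) = inr (b0 hn f g) := by
  intro d
  induction d with
  | zero =>
    intro i hi
    have hlast : i = lastI hn f g := by
      apply Fin.ext
      have := i.isLt
      simp only [lastI]
      omega
    exact ⟨0, by rw [Function.iterate_zero_apply, hlast]; rfl⟩
  | succ d ih =>
    intro i hi
    have hne : i ≠ lastI hn f g := by
      intro h
      have := congrArg Fin.val h
      simp only [lastI] at this
      omega
    have hcs : (cshift i).val = i.val + 1 := by
      rw [cshift_val]
      have := i.isLt
      rw [if_neg (by simp only [lastI] at hne ⊢; omega)]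
    obtain ⟨jj, hjj⟩ := ih (cshift i) (by omega)
    refine ⟨jj + 2, ?_⟩
    have h2 : jj + 2 = jj + 1 + 1 := rfl
    rw [h2, Function.iterate_succ_apply, Function.iterate_succ_apply,
      pmap_inr_w hn hne, pmap_inl_mem hn, hjj]

theorem pmap_eq_FF_off_per (hn : 0 < n) {v : Fin n ⊕ Fin m}
    (hv : v ∉ periodicPts (FF f g)) : pmap hn f g v = FF f g v := by
  cases v with
  | inl a =>
    have ha : a ∉ ZA f g := fun h => hv (mem_ZA_iff.mp h)
    rw [pmap_inl_nonmem hn ha, FF_inl]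
  | inr b =>
    have hb : b ∉ ZB f g := fun h => hv (mem_ZB_iff.mp h)
    have hbne : b ≠ b0 hn f g := fun h => hb (h ▸ b0_mem hn)
    rw [pmap_inr_ne hn hbne, FF_inr]

theorem reach_per (hn : 0 < n) :
    ∀ (j : ℕ) (v : Fin n ⊕ Fin m), (FF f g)^[j] v ∈ periodicPts (FF f g) →
      ∃ jj, (pmap hn f g)^[jj] v ∈ periodicPts (FF f g) := by
  intro j
  induction j with
  | zero => intro v hv; exact ⟨0, hv⟩
  | succ j ih =>
    intro v hv
    by_cases hvper : v ∈ periodicPts (FF f g)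
    · exact ⟨0, hvper⟩
    · rw [Function.iterate_succ_apply] at hv
      obtain ⟨jj, hjj⟩ := ih (FF f g v) hv
      refine ⟨jj + 1, ?_⟩
      rw [Function.iterate_succ_apply, pmap_eq_FF_off_per hn hvper]
      exact hjj

theorem reach_root (hn : 0 < n) (v : Fin n ⊕ Fin m) :
    ∃ jj, (pmap hn f g)^[jj] v = inr (b0 hn f g) := by
  -- first reach a periodic point
  obtain ⟨j, hj⟩ := exists_iterate_mem_periodicPts (FF f g) v
  obtain ⟨jj, hjj⟩ := reach_per hn j v hj
  -- now from a periodic point reach the root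
  set x := (pmap hn f g)^[jj] v with hx
  clear_value x
  have hfromper : ∃ j2, (pmap hn f g)^[j2] x = inr (b0 hn f g) := by
    cases x with
    | inl a =>
      obtain ⟨i, hi⟩ := uu_surj (mem_ZA_iff.mpr hjj)
      obtain ⟨j3, hj3⟩ := reach_from_w hn f g (kk f g - 1 - i.val) i rfl
      refine ⟨j3 + 1, ?_⟩
      rw [Function.iterate_succ_apply, ← hi, pmap_inl_mem hn, hj3]
    | inr b =>
      obtain ⟨i, hi⟩ := ww_surj (mem_ZB_iff.mpr hjj)
      obtain ⟨j3, hj3⟩ := reach_from_w hn f g (kk f g - 1 - i.val) i rfl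
      exact ⟨j3, by rw [← hi, hj3]⟩
  obtain ⟨j2, hj2⟩ := hfromper
  exact ⟨j2 + jj, by rw [Function.iterate_add_apply, ← hx, hj2]⟩

theorem pmap_isRootedMap (hn : 0 < n) (f : Fin n → Fin m) (g : Fin m → Fin n) :
    IsRootedMap (completeBipartiteGraph (Fin n) (Fin m)) (inr (b0 hn f g)) (pmap hn f g) := by
  refine ⟨?_, pmap_root hn, reach_root hn⟩
  intro v hv
  cases v with
  | inl a =>
    by_cases ha : a ∈ ZA f g
    · obtain ⟨i, hi⟩ := uu_surj ha
      rw [← hi, pmap_inl_mem hn]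
      simp
    · rw [pmap_inl_nonmem hn ha]
      simp
  | inr b =>
    have hb : b ≠ b0 hn f g := fun h => hv (by rw [h])
    rw [pmap_inr_ne hn hb]
    simp

/-- The Joyal map: from pairs of functions to marked rooted trees. -/
noncomputable def Phi (hn : 0 < n) (fg : (Fin n → Fin m) × (Fin m → Fin n)) :
    Fin n × Σ b : Fin m, {p : Fin n ⊕ Fin m → Fin n ⊕ Fin m //
      IsRootedMap (completeBipartiteGraph (Fin n) (Fin m)) (inr b) p} :=
  ⟨uu fg.1 fg.2 ⟨0, kk_pos hn fg.1 fg.2⟩,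
    ⟨b0 hn fg.1 fg.2, ⟨pmap hn fg.1 fg.2, pmap_isRootedMap hn fg.1 fg.2⟩⟩⟩

end B3
section B4

variable {n m : ℕ}

theorem p_inl_form {b₀ : Fin m} {p : Fin n ⊕ Fin m → Fin n ⊕ Fin m}
    (hp : IsRootedMap (completeBipartiteGraph (Fin n) (Fin m)) (inr b₀) p) (a : Fin n) :
    ∃ b, p (inl a) = inr b := by
  have hadj := hp.1 (inl a) (by simp)
  rcases hpa : p (inl a) with a' | b
  · rw [hpa] at hadj; simp at hadj
  · exact ⟨b, rfl⟩

theorem p_inr_form {b₀ : Fin m} {p : Fin n ⊕ Fin m → Fin n ⊕ Fin m}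
    (hp : IsRootedMap (completeBipartiteGraph (Fin n) (Fin m)) (inr b₀) p) {b : Fin m}
    (hb : b ≠ b₀) : ∃ a, p (inr b) = inl a := by
  have hadj := hp.1 (inr b) (by simp [hb])
  rcases hpb : p (inr b) with a | b'
  · exact ⟨a, rfl⟩
  · rw [hpb] at hadj; simp at hadj

/-- Absorption time: first time the orbit of `inl a₀` hits the root. -/
noncomputable def tt (a₀ : Fin n) {b₀ : Fin m} {p : Fin n ⊕ Fin m → Fin n ⊕ Fin m}
    (hp : IsRootedMap (completeBipartiteGraph (Fin n) (Fin m)) (inr b₀) p) : ℕ :=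
  Nat.find (hp.2.2 (inl a₀))

variable {a₀ : Fin n} {b₀ : Fin m} {p : Fin n ⊕ Fin m → Fin n ⊕ Fin m}
  {hp : IsRootedMap (completeBipartiteGraph (Fin n) (Fin m)) (inr b₀) p}

theorem tt_spec (a₀ : Fin n)
    (hp : IsRootedMap (completeBipartiteGraph (Fin n) (Fin m)) (inr b₀) p) :
    p^[tt a₀ hp] (inl a₀) = inr b₀ := Nat.find_spec (hp.2.2 (inl a₀))

theorem tt_min (a₀ : Fin n)
    (hp : IsRootedMap (completeBipartiteGraph (Fin n) (Fin m)) (inr b₀) p)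
    {j : ℕ} (hj : j < tt a₀ hp) : p^[j] (inl a₀) ≠ inr b₀ := Nat.find_min (hp.2.2 (inl a₀)) hj

theorem orbit_parity (a₀ : Fin n)
    (hp : IsRootedMap (completeBipartiteGraph (Fin n) (Fin m)) (inr b₀) p) :
    ∀ j, j ≤ tt a₀ hp → (Even j → ∃ a, p^[j] (inl a₀) = inl a) ∧
      (¬Even j → ∃ b, p^[j] (inl a₀) = inr b) := by
  intro j
  induction j with
  | zero =>
    intro _
    exact ⟨fun _ => ⟨a₀, rfl⟩, fun h => absurd (Even.zero) h⟩
  | succ j ih =>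
    intro hj1
    obtain ⟨ihE, ihO⟩ := ih (by omega)
    by_cases hev : Even j
    · obtain ⟨a, ha⟩ := ihE hev
      refine ⟨fun h => absurd h (by simp [Nat.even_add_one, hev]), fun _ => ?_⟩
      obtain ⟨b, hb⟩ := p_inl_form hp a
      exact ⟨b, by rw [Function.iterate_succ_apply', ha, hb]⟩
    · obtain ⟨b, hb⟩ := ihO hev
      have hbne : b ≠ b₀ := by
        intro h
        exact tt_min a₀ hp (j := j) (by omega) (by rw [hb, h])
      obtain ⟨a, ha⟩ := p_inr_form hp hbne
      refine ⟨fun _ => ⟨a, by rw [Function.iterate_succ_apply', hb, ha]⟩, fun h => ?_⟩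
      exact absurd (by simp [Nat.even_add_one, hev] : Even (j + 1)) h

theorem tt_not_even (a₀ : Fin n)
    (hp : IsRootedMap (completeBipartiteGraph (Fin n) (Fin m)) (inr b₀) p) :
    ¬Even (tt a₀ hp) := by
  intro hev
  obtain ⟨a, ha⟩ := ((orbit_parity a₀ hp (tt a₀ hp) le_rfl).1) hev
  rw [tt_spec a₀ hp] at ha
  exact absurd ha (by simp)

/-- Half-length of the path. -/
noncomputable def kp (a₀ : Fin n) {b₀ : Fin m} {p : Fin n ⊕ Fin m → Fin n ⊕ Fin m}
    (hp : IsRootedMap (completeBipartiteGraph (Fin n) (Fin m)) (inr b₀) p) : ℕ :=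
  (tt a₀ hp + 1) / 2

theorem tt_eq (a₀ : Fin n)
    (hp : IsRootedMap (completeBipartiteGraph (Fin n) (Fin m)) (inr b₀) p) :
    tt a₀ hp = 2 * kp a₀ hp - 1 ∧ 0 < kp a₀ hp := by
  have h := tt_not_even a₀ hp
  rw [Nat.even_iff] at h
  have h2 : tt a₀ hp % 2 = 1 := by omega
  constructor <;> (simp only [kp]; omega)

def extractA (hn : 0 < n) : Fin n ⊕ Fin m → Fin n := Sum.elim id (fun _ => ⟨0, hn⟩)
def extractB (hm : 0 < m) : Fin n ⊕ Fin m → Fin m := Sum.elim (fun _ => ⟨0, hm⟩) id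

@[simp] theorem extractA_inl (hn : 0 < n) (a : Fin n) : extractA hn (inl a : Fin n ⊕ Fin m) = a := rfl
@[simp] theorem extractB_inr (hm : 0 < m) (b : Fin m) : extractB hm (inr b : Fin n ⊕ Fin m) = b := rfl

/-- Path order enumeration, A side. -/
noncomputable def upath (hn : 0 < n) (a₀ : Fin n) {b₀ : Fin m}
    {p : Fin n ⊕ Fin m → Fin n ⊕ Fin m}
    (hp : IsRootedMap (completeBipartiteGraph (Fin n) (Fin m)) (inr b₀) p)
    (i : Fin (kp a₀ hp)) : Fin n :=
  extractA hn (p^[2 * i.val] (inl a₀))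

/-- Path order enumeration, B side. -/
noncomputable def wpath (hm : 0 < m) (a₀ : Fin n) {b₀ : Fin m}
    {p : Fin n ⊕ Fin m → Fin n ⊕ Fin m}
    (hp : IsRootedMap (completeBipartiteGraph (Fin n) (Fin m)) (inr b₀) p)
    (i : Fin (kp a₀ hp)) : Fin m :=
  extractB hm (p^[2 * i.val + 1] (inl a₀))

theorem orbA (hn : 0 < n) (a₀ : Fin n)
    (hp : IsRootedMap (completeBipartiteGraph (Fin n) (Fin m)) (inr b₀) p)
    (i : Fin (kp a₀ hp)) : p^[2 * i.val] (inl a₀) = inl (upath hn a₀ hp i) := by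
  obtain ⟨htt, hkp⟩ := tt_eq a₀ hp
  have hle : 2 * i.val ≤ tt a₀ hp := by have := i.isLt; omega
  obtain ⟨a, ha⟩ := (orbit_parity a₀ hp _ hle).1 (even_two_mul _)
  rw [upath, ha, extractA_inl]

theorem orbB (hm : 0 < m) (a₀ : Fin n)
    (hp : IsRootedMap (completeBipartiteGraph (Fin n) (Fin m)) (inr b₀) p)
    (i : Fin (kp a₀ hp)) : p^[2 * i.val + 1] (inl a₀) = inr (wpath hm a₀ hp i) := by
  obtain ⟨htt, hkp⟩ := tt_eq a₀ hp
  have hle : 2 * i.val + 1 ≤ tt a₀ hp := by have := i.isLt; omega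
  obtain ⟨b, hb⟩ := (orbit_parity a₀ hp _ hle).2 (by rw [Nat.even_iff]; omega)
  rw [wpath, hb, extractB_inr]

theorem orbit_inj (a₀ : Fin n)
    (hp : IsRootedMap (completeBipartiteGraph (Fin n) (Fin m)) (inr b₀) p) :
    ∀ {i j : ℕ}, i ≤ tt a₀ hp → j ≤ tt a₀ hp →
      p^[i] (inl a₀) = p^[j] (inl a₀) → i = j := by
  have key : ∀ {i j : ℕ}, i < j → j ≤ tt a₀ hp →
      p^[i] (inl a₀) = p^[j] (inl a₀) → False := by
    intro i j hij hjt heq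
    set d := j - i with hd
    have hdpos : 0 < d := by omega
    have hshift : ∀ s, i ≤ s → p^[s] (inl a₀) = p^[s + d] (inl a₀) := by
      intro s hs
      have e1 : p^[s] (inl a₀) = p^[s - i] (p^[i] (inl a₀)) := by
        rw [← Function.iterate_add_apply]
        congr 1
        omega
      have e2 : p^[s + d] (inl a₀) = p^[s - i] (p^[j] (inl a₀)) := by
        rw [← Function.iterate_add_apply]
        congr 1
        omega
      rw [e1, e2, heq]
    have h3 : p^[tt a₀ hp - d] (inl a₀) = inr b₀ := by
      rw [hshift (tt a₀ hp - d) (by omega)]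
      have h4 : tt a₀ hp - d + d = tt a₀ hp := by omega
      rw [h4]
      exact tt_spec a₀ hp
    exact tt_min a₀ hp (by omega) h3
  intro i j hi hj heq
  rcases lt_trichotomy i j with h | h | h
  · exact absurd heq (fun he => key h hj he)
  · exact h
  · exact absurd heq.symm (fun he => key h hi he)

theorem upath_inj (hn : 0 < n) (a₀ : Fin n)
    (hp : IsRootedMap (completeBipartiteGraph (Fin n) (Fin m)) (inr b₀) p) :
    Function.Injective (upath hn a₀ hp) := by
  obtain ⟨htt, hkp⟩ := tt_eq a₀ hp
  intro i j h
  have h1 := orbA hn a₀ hp i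
  have h2 := orbA hn a₀ hp j
  rw [h] at h1
  have := orbit_inj a₀ hp (i := 2 * i.val) (j := 2 * j.val)
    (by have := i.isLt; omega) (by have := j.isLt; omega) (by rw [h1, h2])
  exact Fin.ext (by omega)

theorem wpath_inj (hm : 0 < m) (a₀ : Fin n)
    (hp : IsRootedMap (completeBipartiteGraph (Fin n) (Fin m)) (inr b₀) p) :
    Function.Injective (wpath hm a₀ hp) := by
  obtain ⟨htt, hkp⟩ := tt_eq a₀ hp
  intro i j h
  have h1 := orbB hm a₀ hp i
  have h2 := orbB hm a₀ hp j
  rw [h] at h1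
  have := orbit_inj a₀ hp (i := 2 * i.val + 1) (j := 2 * j.val + 1)
    (by have := i.isLt; omega) (by have := j.isLt; omega) (by rw [h1, h2])
  exact Fin.ext (by omega)

theorem upath_zero (hn : 0 < n) (a₀ : Fin n)
    (hp : IsRootedMap (completeBipartiteGraph (Fin n) (Fin m)) (inr b₀) p)
    (h0 : 0 < kp a₀ hp) : upath hn a₀ hp ⟨0, h0⟩ = a₀ := by
  simp [upath]

theorem wpath_last (hm : 0 < m) (a₀ : Fin n)
    (hp : IsRootedMap (completeBipartiteGraph (Fin n) (Fin m)) (inr b₀) p)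
    (h0 : kp a₀ hp - 1 < kp a₀ hp) : wpath hm a₀ hp ⟨kp a₀ hp - 1, h0⟩ = b₀ := by
  obtain ⟨htt, hkp⟩ := tt_eq a₀ hp
  have h1 : 2 * (kp a₀ hp - 1) + 1 = tt a₀ hp := by omega
  have := orbB hm a₀ hp ⟨kp a₀ hp - 1, h0⟩
  simp only [h1] at this
  rw [tt_spec a₀ hp] at this
  exact Sum.inr_injective this.symm

theorem absorb (a₀ : Fin n)
    (hp : IsRootedMap (completeBipartiteGraph (Fin n) (Fin m)) (inr b₀) p)
    {j : ℕ} (hj : tt a₀ hp ≤ j) : p^[j] (inl a₀) = inr b₀ := by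
  have h1 : j = (j - tt a₀ hp) + tt a₀ hp := by omega
  rw [h1, Function.iterate_add_apply, tt_spec a₀ hp, hp.iterate_root]

/-- The A-side path vertex set. -/
noncomputable def PA (a₀ : Fin n) {b₀ : Fin m} {p : Fin n ⊕ Fin m → Fin n ⊕ Fin m}
    (hp : IsRootedMap (completeBipartiteGraph (Fin n) (Fin m)) (inr b₀) p) : Finset (Fin n) :=
  Finset.univ.filter fun a => ∃ j, p^[j] (inl a₀) = inl a

theorem mem_PA_iff (hn : 0 < n) (a₀ : Fin n)
    (hp : IsRootedMap (completeBipartiteGraph (Fin n) (Fin m)) (inr b₀) p) {a : Fin n} :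
    a ∈ PA a₀ hp ↔ ∃ i, upath hn a₀ hp i = a := by
  obtain ⟨htt, hkp⟩ := tt_eq a₀ hp
  simp only [PA, Finset.mem_filter, Finset.mem_univ, true_and]
  constructor
  · rintro ⟨j, hj⟩
    rcases le_or_gt (tt a₀ hp) j with hle | hlt
    · rw [absorb a₀ hp hle] at hj
      exact absurd hj (by simp)
    · by_cases hev : Even j
      · obtain ⟨c, hc⟩ := hev
        have hcc : c < kp a₀ hp := by omega
        refine ⟨⟨c, hcc⟩, ?_⟩
        have := orbA hn a₀ hp ⟨c, hcc⟩
        simp only at this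
        have h2 : 2 * c = j := by omega
        rw [h2, hj] at this
        exact Sum.inl_injective this.symm
      · obtain ⟨b, hb⟩ := (orbit_parity a₀ hp j (by omega)).2 hev
        rw [hj] at hb
        exact absurd hb (by simp)
  · rintro ⟨i, hi⟩
    exact ⟨2 * i.val, by rw [orbA hn a₀ hp i, hi]⟩

theorem PA_card (hn : 0 < n) (a₀ : Fin n)
    (hp : IsRootedMap (completeBipartiteGraph (Fin n) (Fin m)) (inr b₀) p) :
    (PA a₀ hp).card = kp a₀ hp := by
  have h1 : PA a₀ hp = Finset.image (upath hn a₀ hp) Finset.univ := by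
    ext a
    rw [mem_PA_iff hn a₀ hp, Finset.mem_image]
    simp
  rw [h1, Finset.card_image_of_injective _ (upath_inj hn a₀ hp), Finset.card_univ,
    Fintype.card_fin]

/-- Sorted enumeration of `PA`. -/
noncomputable def ePA (hn : 0 < n) (a₀ : Fin n) {b₀ : Fin m}
    {p : Fin n ⊕ Fin m → Fin n ⊕ Fin m}
    (hp : IsRootedMap (completeBipartiteGraph (Fin n) (Fin m)) (inr b₀) p) :
    Fin (kp a₀ hp) ≃o {x // x ∈ PA a₀ hp} :=
  (PA a₀ hp).orderIsoOfFin (PA_card hn a₀ hp)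

/-- Reconstructed `f`. -/
noncomputable def fRec (hn : 0 < n) (hm : 0 < m) (a₀ : Fin n) {b₀ : Fin m}
    {p : Fin n ⊕ Fin m → Fin n ⊕ Fin m}
    (hp : IsRootedMap (completeBipartiteGraph (Fin n) (Fin m)) (inr b₀) p) :
    Fin n → Fin m := fun a =>
  if ha : a ∈ PA a₀ hp then wpath hm a₀ hp ((ePA hn a₀ hp).symm ⟨a, ha⟩)
  else extractB hm (p (inl a))

/-- Reconstructed `g`. -/
noncomputable def gRec (hn : 0 < n) (a₀ : Fin n) (b₀ : Fin m)
    {p : Fin n ⊕ Fin m → Fin n ⊕ Fin m}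
    (hp : IsRootedMap (completeBipartiteGraph (Fin n) (Fin m)) (inr b₀) p) :
    Fin m → Fin n := fun b =>
  if b = b₀ then upath hn a₀ hp ⟨0, (tt_eq a₀ hp).2⟩ else extractA hn (p (inr b))

/-- The inverse Joyal map. -/
noncomputable def Psi (hn : 0 < n) (hm : 0 < m)
    (x : Fin n × Σ b : Fin m, {p : Fin n ⊕ Fin m → Fin n ⊕ Fin m //
      IsRootedMap (completeBipartiteGraph (Fin n) (Fin m)) (inr b) p}) :
    (Fin n → Fin m) × (Fin m → Fin n) :=
  (fRec hn hm x.1 x.2.2.2, gRec hn x.1 x.2.1 x.2.2.2)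

end B4
section B5

variable {n m : ℕ}

theorem round1 (hn : 0 < n) (hm : 0 < m) (f : Fin n → Fin m) (g : Fin m → Fin n) :
    Psi hn hm (Phi hn (f, g)) = (f, g) := by
  set A0 := uu f g ⟨0, kk_pos hn f g⟩ with hA0
  set B0 := b0 hn f g with hB0
  have HP := pmap_isRootedMap hn f g
  -- orbit description in terms of the Φ data
  have horb := pmap_orbit hn f g
  -- absorption time
  have htt : tt A0 HP = 2 * kk f g - 1 := by
    apply le_antisymm
    · apply Nat.find_le
      have h1 := (horb (kk f g - 1) (by have := kk_pos hn f g; omega)).2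
      have h2 : 2 * (kk f g - 1) + 1 = 2 * kk f g - 1 := by
        have := kk_pos hn f g; omega
      rw [h2] at h1
      rw [h1]
      rfl
    · rw [tt, Nat.le_find_iff]
      intro j hj
      intro hcon
      rcases Nat.even_or_odd j with hev | hodd
      · obtain ⟨c, hc⟩ := hev
        have hcc : c < kk f g := by omega
        have := (horb c hcc).1
        have hjc : 2 * c = j := by omega
        rw [hjc, hcon] at this
        exact absurd this (by simp)
      · obtain ⟨c, hc⟩ := hodd
        have hcc : c < kk f g := by omega
        have := (horb c hcc).2
        have hjc : 2 * c + 1 = j := by omega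
        rw [hjc, hcon] at this
        have hww : ww f g ⟨c, hcc⟩ = b0 hn f g := Sum.inr_injective this.symm
        rw [ww_eq_b0_iff hn] at hww
        have := congrArg Fin.val hww
        simp only [lastI] at this
        omega
  have hkp : kp A0 HP = kk f g := by
    rw [kp, htt]
    have := kk_pos hn f g
    omega
  have hupath : ∀ i : Fin (kp A0 HP),
      upath hn A0 HP i = uu f g ⟨i.val, by have := i.isLt; omega⟩ := by
    intro i
    have hlt : i.val < kk f g := by have := i.isLt; omega
    rw [upath, (horb i.val hlt).1]
    exact extractA_inl hn _
  have hwpath : ∀ i : Fin (kp A0 HP),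
      wpath hm A0 HP i = ww f g ⟨i.val, by have := i.isLt; omega⟩ := by
    intro i
    have hlt : i.val < kk f g := by have := i.isLt; omega
    rw [wpath, (horb i.val hlt).2]
    exact extractB_inr hm _
  have hPA : PA A0 HP = ZA f g := by
    ext a
    rw [mem_PA_iff hn A0 HP]
    constructor
    · rintro ⟨i, hi⟩
      rw [hupath i] at hi
      rw [← hi]
      exact uu_mem _
    · intro ha
      obtain ⟨i, hi⟩ := uu_surj ha
      refine ⟨⟨i.val, by have := i.isLt; omega⟩, ?_⟩
      rw [hupath]
      rw [← hi]
  -- f component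
  have hf : fRec hn hm A0 HP = f := by
    funext a
    by_cases ha : a ∈ PA A0 HP
    · rw [fRec]
      rw [dif_pos ha]
      set j := (ePA hn A0 HP).symm ⟨a, ha⟩ with hj
      have hja : ((ePA hn A0 HP j) : Fin n) = a := by
        rw [hj, OrderIso.apply_symm_apply]
      have hjlt : j.val < kk f g := by have := j.isLt; omega
      have hcongr := orderIsoOfFin_congr hPA (PA_card hn A0 HP)
        (show (ZA f g).card = kk f g from rfl) j hjlt
      simp only [ePA] at hja
      have heZ := hcongr.symm.trans hja
      rw [hwpath j]
      show ww f g ⟨j.val, hjlt⟩ = f a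
      simp only [ww, eZ]
      rw [heZ]
    · rw [fRec, dif_neg ha]
      have ha' : a ∉ ZA f g := by rwa [hPA] at ha
      have h5 : pmap hn f g (inl a) = inr (f a) := pmap_inl_nonmem hn ha'
      rw [h5]
      exact extractB_inr hm _
  -- g component
  have hg : gRec hn A0 B0 HP = g := by
    funext b
    by_cases hb : b = B0
    · rw [gRec]
      rw [if_pos hb, hb]
      rw [hupath ⟨0, (tt_eq A0 HP).2⟩]
      have hcp : cpshift (⟨0, kk_pos hn f g⟩ : Fin (kk f g)) = lastI hn f g := by
        rw [cpshift_zero]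
        rfl
      show g (ww f g (cpshift ⟨0, kk_pos hn f g⟩)) = g (ww f g (lastI hn f g))
      rw [hcp]
    · rw [gRec, if_neg hb]
      have h5 : pmap hn f g (inr b) = inl (g b) := pmap_inr_ne hn hb
      rw [h5]
      exact extractA_inl hn _
  show (fRec hn hm A0 HP, gRec hn A0 B0 HP) = (f, g)
  rw [hf, hg]

end B5
section B6

variable {n m : ℕ}

theorem sigma_helper {K' : SimpleGraph (Fin n ⊕ Fin m)} {b₁ b₂ : Fin m} (hb : b₁ = b₂)
    (q1 : {p : Fin n ⊕ Fin m → Fin n ⊕ Fin m // IsRootedMap K' (inr b₁) p})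
    (q2 : {p : Fin n ⊕ Fin m → Fin n ⊕ Fin m // IsRootedMap K' (inr b₂) p})
    (h : q1.val = q2.val) :
    (⟨b₁, q1⟩ : Σ b : Fin m, {p : Fin n ⊕ Fin m → Fin n ⊕ Fin m //
      IsRootedMap K' (inr b) p}) = ⟨b₂, q2⟩ := by
  subst hb
  exact congrArg _ (Subtype.ext h)

theorem round2 (hn : 0 < n) (hm : 0 < m)
    (x : Fin n × Σ b : Fin m, {p : Fin n ⊕ Fin m → Fin n ⊕ Fin m //
      IsRootedMap (completeBipartiteGraph (Fin n) (Fin m)) (inr b) p}) :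
    Phi hn (Psi hn hm x) = x := by
  obtain ⟨a₀, ⟨b₀, ⟨p, hp⟩⟩⟩ := x
  obtain ⟨htt, hkp0⟩ := tt_eq a₀ hp
  set f' : Fin n → Fin m := fRec hn hm a₀ hp with hf'
  set g' : Fin m → Fin n := gRec hn a₀ b₀ hp with hg'
  set F : Fin n ⊕ Fin m → Fin n ⊕ Fin m := FF f' g' with hF
  set O : Set (Fin n ⊕ Fin m) := {v | ∃ j, p^[j] (inl a₀) = v} with hO
  have lastlt : kp a₀ hp - 1 < kp a₀ hp := by omega
  -- membership characterizations
  have hOA : ∀ a : Fin n, (inl a ∈ O ↔ a ∈ PA a₀ hp) := by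
    intro a
    simp [hO, PA]
  have hwb : ∀ i : Fin (kp a₀ hp), wpath hm a₀ hp i = b₀ ↔ i = ⟨kp a₀ hp - 1, lastlt⟩ := by
    intro i
    constructor
    · intro h
      apply wpath_inj hm a₀ hp
      rw [h, wpath_last hm a₀ hp lastlt]
    · rintro rfl
      exact wpath_last hm a₀ hp lastlt
  have hOB : ∀ b : Fin m, (inr b ∈ O ↔ ∃ i, wpath hm a₀ hp i = b) := by
    intro b
    constructor
    · rintro ⟨j, hj⟩
      rcases le_or_gt (tt a₀ hp) j with hle | hlt
      · rw [absorb a₀ hp hle] at hj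
        obtain rfl : b₀ = b := Sum.inr_injective hj
        exact ⟨⟨kp a₀ hp - 1, lastlt⟩, wpath_last hm a₀ hp lastlt⟩
      · by_cases hev : Even j
        · obtain ⟨a, ha⟩ := (orbit_parity a₀ hp j (by omega)).1 hev
          rw [hj] at ha
          exact absurd ha (by simp)
        · have hc : j = 2 * (j / 2) + 1 := by rw [Nat.even_iff] at hev; omega
          have hcc : j / 2 < kp a₀ hp := by omega
          refine ⟨⟨j / 2, hcc⟩, ?_⟩
          have h5 := orbB hm a₀ hp ⟨j / 2, hcc⟩
          have hjc : 2 * (j / 2) + 1 = j := by omega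
          rw [show 2 * (⟨j / 2, hcc⟩ : Fin (kp a₀ hp)).val + 1 = j from hjc, hj] at h5
          exact Sum.inr_injective h5.symm
    · rintro ⟨i, hi⟩
      exact ⟨2 * i.val + 1, by rw [orbB hm a₀ hp i, hi]⟩
  -- step facts
  have s1 : ∀ a (ha : a ∈ PA a₀ hp),
      F (inl a) = inr (wpath hm a₀ hp ((ePA hn a₀ hp).symm ⟨a, ha⟩)) := by
    intro a ha
    show inr (fRec hn hm a₀ hp a) = _
    simp only [fRec]
    rw [dif_pos ha]
  have s2 : ∀ a, a ∉ PA a₀ hp → F (inl a) = p (inl a) := by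
    intro a ha
    obtain ⟨xb, hxb⟩ := p_inl_form hp a
    show inr (fRec hn hm a₀ hp a) = _
    simp only [fRec]
    rw [dif_neg ha, hxb, extractB_inr]
  have s3 : F (inr b₀) = inl (upath hn a₀ hp ⟨0, hkp0⟩) := by
    show inl (gRec hn a₀ b₀ hp b₀) = _
    simp only [gRec, eq_self_iff_true, if_true]
  have s4 : ∀ b, b ≠ b₀ → F (inr b) = p (inr b) := by
    intro b hb
    obtain ⟨xa, hxa⟩ := p_inr_form hp hb
    show inl (gRec hn a₀ b₀ hp b) = _
    simp only [gRec]
    rw [if_neg hb, hxa, extractA_inl]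
  have s5 : ∀ (i : Fin (kp a₀ hp)) (hi : i.val + 1 < kp a₀ hp),
      p (inr (wpath hm a₀ hp i)) = inl (upath hn a₀ hp ⟨i.val + 1, hi⟩) := by
    intro i hi
    have h1 := orbB hm a₀ hp i
    have h2 := orbA hn a₀ hp ⟨i.val + 1, hi⟩
    have h3 : 2 * ((⟨i.val + 1, hi⟩ : Fin (kp a₀ hp)) : ℕ) = (2 * i.val + 1) + 1 := by
      show 2 * (i.val + 1) = _
      omega
    rw [h3, Function.iterate_succ_apply', h1] at h2
    exact h2
  have s6 : ∀ i : Fin (kp a₀ hp), p (inl (upath hn a₀ hp i)) = inr (wpath hm a₀ hp i) := by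
    intro i
    have h1 := orbA hn a₀ hp i
    have h2 := orbB hm a₀ hp i
    rw [Function.iterate_succ_apply', h1] at h2
    exact h2
  -- O is invariant and F is surjective on it
  have hmapsTo : Set.MapsTo F O O := by
    rintro v hv
    cases v with
    | inl a =>
      have ha := (hOA a).mp hv
      rw [s1 a ha]
      exact (hOB _).mpr ⟨_, rfl⟩
    | inr b =>
      obtain ⟨i, hi⟩ := (hOB b).mp hv
      by_cases hib : b = b₀
      · subst hib
        rw [s3]
        exact (hOA _).mpr ((mem_PA_iff hn a₀ hp).mpr ⟨_, rfl⟩)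
      · have hilt : i.val + 1 < kp a₀ hp := by
          by_contra hcon
          apply hib
          rw [← hi]
          exact (hwb i).mpr (Fin.ext (show i.val = kp a₀ hp - 1 by
            have := i.isLt; omega))
        rw [← hi, s4 _ (fun hh => hib (hi ▸ hh)), s5 i hilt]
        exact (hOA _).mpr ((mem_PA_iff hn a₀ hp).mpr ⟨_, rfl⟩)
  have hsurjOn : Set.SurjOn F O O := by
    rintro v hv
    cases v with
    | inl a =>
      obtain ⟨i, hi⟩ := (mem_PA_iff hn a₀ hp).mp ((hOA a).mp hv)
      obtain ⟨iv, hivlt⟩ := i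
      rcases Nat.eq_zero_or_pos iv with h0 | hpos
      · refine ⟨inr b₀, (hOB b₀).mpr ⟨⟨kp a₀ hp - 1, lastlt⟩, wpath_last hm a₀ hp lastlt⟩, ?_⟩
        rw [s3, ← hi]
        congr 2
        exact Fin.ext (show (0 : ℕ) = iv by omega)
      · have hprev : (iv - 1) + 1 < kp a₀ hp := by omega
        have hprevlt : iv - 1 < kp a₀ hp := by omega
        have hprevne : wpath hm a₀ hp ⟨iv - 1, hprevlt⟩ ≠ b₀ := by
          intro h
          have h2 : iv - 1 = kp a₀ hp - 1 := congrArg Fin.val ((hwb _).mp h)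
          omega
        refine ⟨inr (wpath hm a₀ hp ⟨iv - 1, hprevlt⟩), (hOB _).mpr ⟨_, rfl⟩, ?_⟩
        rw [s4 _ hprevne, s5 _ hprev, ← hi]
        congr 2
        exact Fin.ext (show (iv - 1) + 1 = iv by omega)
    | inr b =>
      obtain ⟨i, hi⟩ := (hOB b).mp hv
      have hmem := (ePA hn a₀ hp i).2
      refine ⟨inl ((ePA hn a₀ hp i) : Fin n), (hOA _).mpr hmem, ?_⟩
      rw [s1 _ hmem, ← hi]
      congr 2
      have h6 : (⟨((ePA hn a₀ hp i) : Fin n), hmem⟩ : {x // x ∈ PA a₀ hp}) =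
          ePA hn a₀ hp i := Subtype.ext rfl
      rw [h6, OrderIso.symm_apply_apply]
  have hOper : ∀ v ∈ O, v ∈ periodicPts F :=
    mem_periodicPts_of_surjOn (Set.toFinite O) hmapsTo hsurjOn
  -- converse: periodic points lie on the path
  have hFoff : ∀ v, v ∉ O → F v = p v := by
    intro v hv
    cases v with
    | inl a => exact s2 a (fun h => hv ((hOA a).mpr h))
    | inr b =>
      refine s4 b (fun h => hv ?_)
      subst h
      exact (hOB b).mpr ⟨⟨kp a₀ hp - 1, lastlt⟩, wpath_last hm a₀ hp lastlt⟩
  have claimB : ∀ (d : ℕ) (x), x ∈ O → F^[d] x ∈ O := by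
    intro d
    induction d with
    | zero => intro x hx; exact hx
    | succ d ih =>
      intro x hx
      rw [Function.iterate_succ_apply']
      exact hmapsTo (ih x hx)
  have claimA : ∀ (j : ℕ) (v), p^[j] v ∈ O → ∃ jj, F^[jj] v ∈ O := by
    intro j
    induction j with
    | zero => intro v hv; exact ⟨0, hv⟩
    | succ j ih =>
      intro v hv
      by_cases hvO : v ∈ O
      · exact ⟨0, hvO⟩
      · rw [Function.iterate_succ_apply] at hv
        obtain ⟨jj, hjj⟩ := ih (p v) hv
        refine ⟨jj + 1, ?_⟩
        rw [Function.iterate_succ_apply, hFoff v hvO]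
        exact hjj
  have hperO : ∀ v, v ∈ periodicPts F → v ∈ O := by
    intro v hv
    obtain ⟨c, hc, hper⟩ := hv
    obtain ⟨k0, hk0⟩ := hp.2.2 v
    have hrO : p^[k0] v ∈ O := by
      rw [hk0]
      exact (hOB b₀).mpr ⟨⟨kp a₀ hp - 1, lastlt⟩, wpath_last hm a₀ hp lastlt⟩
    obtain ⟨jj, hjj⟩ := claimA k0 v hrO
    by_contra hvO
    have hMper : F^[c * (jj + 1)] v = v := (hper.mul_const (jj + 1)).eq
    have hMge : jj ≤ c * (jj + 1) := by
      have h7 := Nat.le_mul_of_pos_left (jj + 1) hc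
      omega
    have h8 : F^[c * (jj + 1)] v ∈ O := by
      have h9 : c * (jj + 1) = (c * (jj + 1) - jj) + jj := by omega
      rw [h9, Function.iterate_add_apply]
      exact claimB _ _ hjj
    rw [hMper] at h8
    exact hvO h8
  -- identify the Φ data
  have hZA : ZA f' g' = PA a₀ hp := by
    ext a
    rw [mem_ZA_iff, ← hOA a]
    exact ⟨fun h => hperO _ h, fun h => hOper _ h⟩
  have hkk : kk f' g' = kp a₀ hp := by rw [kk, hZA, PA_card hn a₀ hp]
  have hww : ∀ i : Fin (kk f' g'), ww f' g' i =
      wpath hm a₀ hp ⟨i.val, by have := i.isLt; omega⟩ := by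
    intro i
    have hilt : i.val < kp a₀ hp := by have := i.isLt; omega
    have hcongr := orderIsoOfFin_congr hZA (show (ZA f' g').card = kk f' g' from rfl)
      (PA_card hn a₀ hp) i hilt
    have hmem : ((eZ f' g' i : {x // x ∈ ZA f' g'}) : Fin n) ∈ PA a₀ hp := by
      rw [← hZA]
      exact (eZ f' g' i).2
    have hstep : ww f' g' i =
        wpath hm a₀ hp ((ePA hn a₀ hp).symm
          ⟨((eZ f' g' i : {x // x ∈ ZA f' g'}) : Fin n), hmem⟩) := by
      show fRec hn hm a₀ hp _ = _
      simp only [fRec]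
      rw [dif_pos hmem]
    rw [hstep]
    congr 1
    have h10 : (⟨((eZ f' g' i : {x // x ∈ ZA f' g'}) : Fin n), hmem⟩ :
        {x // x ∈ PA a₀ hp}) = ePA hn a₀ hp ⟨i.val, hilt⟩ :=
      Subtype.ext (by exact hcongr)
    rw [h10, OrderIso.symm_apply_apply]
  have hb0 : b0 hn f' g' = b₀ := by
    show ww f' g' (lastI hn f' g') = b₀
    rw [hww (lastI hn f' g')]
    exact (hwb _).mpr (Fin.ext (show kk f' g' - 1 = kp a₀ hp - 1 by omega))
  have huu : ∀ i : Fin (kk f' g'), uu f' g' i =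
      upath hn a₀ hp ⟨i.val, by have := i.isLt; omega⟩ := by
    intro i
    have hilt : i.val < kp a₀ hp := by have := i.isLt; omega
    have hcplt : (cpshift i).val < kp a₀ hp := by have := (cpshift i).isLt; omega
    show gRec hn a₀ b₀ hp (ww f' g' (cpshift i)) = _
    rw [hww (cpshift i)]
    by_cases h0 : i.val = 0
    · have hw : wpath hm a₀ hp ⟨(cpshift i).val, hcplt⟩ = b₀ := by
        refine (hwb _).mpr (Fin.ext (show (cpshift i).val = kp a₀ hp - 1 from ?_))
        rw [cpshift_val, if_pos h0]
        omega
      rw [hw]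
      simp only [gRec, eq_self_iff_true, if_true]
      congr 1
      exact Fin.ext (show (0 : ℕ) = i.val by omega)
    · have hcpv : (cpshift i).val = i.val - 1 := by rw [cpshift_val, if_neg h0]
      have hne : wpath hm a₀ hp ⟨(cpshift i).val, hcplt⟩ ≠ b₀ := by
        intro h
        have h2 : (cpshift i).val = kp a₀ hp - 1 := congrArg Fin.val ((hwb _).mp h)
        have := i.isLt
        omega
      simp only [gRec]
      rw [if_neg hne]
      have hb5 : (⟨(cpshift i).val, hcplt⟩ : Fin (kp a₀ hp)).val + 1 < kp a₀ hp := by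
        show (cpshift i).val + 1 < kp a₀ hp
        have := i.isLt
        omega
      rw [s5 _ hb5, extractA_inl]
      congr 1
      exact Fin.ext (show (cpshift i).val + 1 = i.val by omega)
  have ha0 : uu f' g' ⟨0, kk_pos hn f' g'⟩ = a₀ := by
    rw [huu]
    exact upath_zero hn a₀ hp _
  have hpm : pmap hn f' g' = p := by
    funext v
    cases v with
    | inl a =>
      by_cases ha : a ∈ ZA f' g'
      · obtain ⟨i, hi⟩ := uu_surj ha
        rw [← hi, pmap_inl_mem hn, hww i, huu i, s6]
      · rw [pmap_inl_nonmem hn ha]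
        obtain ⟨xb, hxb⟩ := p_inl_form hp a
        have ha' : a ∉ PA a₀ hp := by rwa [hZA] at ha
        show inr (fRec hn hm a₀ hp a) = _
        simp only [fRec]
        rw [dif_neg ha', hxb, extractB_inr]
    | inr b =>
      by_cases hb : b = b0 hn f' g'
      · rw [hb, pmap_root hn, hb0, hp.2.1]
      · have hbb : b ≠ b₀ := by rwa [hb0] at hb
        rw [pmap_inr_ne hn hb]
        obtain ⟨xa, hxa⟩ := p_inr_form hp hbb
        show inl (gRec hn a₀ b₀ hp b) = _
        simp only [gRec]
        rw [if_neg hbb, hxa, extractA_inl]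
  -- assemble
  have hphi : Phi hn (Psi hn hm (a₀, ⟨b₀, ⟨p, hp⟩⟩)) =
      (uu f' g' ⟨0, kk_pos hn f' g'⟩,
        ⟨b0 hn f' g', ⟨pmap hn f' g', pmap_isRootedMap hn f' g'⟩⟩) := rfl
  rw [hphi, Prod.mk.injEq]
  exact ⟨ha0, sigma_helper hb0 _ _ hpm⟩

end B6
section B7

variable {n m : ℕ}

theorem joyal_count (hn : 0 < n) (hm : 0 < m) :
    m ^ n * n ^ m = n * (m *
      Nat.card {H : SimpleGraph (Fin n ⊕ Fin m) //
        H ≤ completeBipartiteGraph (Fin n) (Fin m) ∧ H.IsTree}) := by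
  classical
  set T := Nat.card {H : SimpleGraph (Fin n ⊕ Fin m) //
    H ≤ completeBipartiteGraph (Fin n) (Fin m) ∧ H.IsTree} with hT
  have hbij : Function.Bijective (Phi (n := n) (m := m) hn) := by
    apply Function.bijective_iff_has_inverse.mpr
    refine ⟨Psi hn hm, ?_, ?_⟩
    · rintro ⟨f, g⟩
      exact round1 hn hm f g
    · intro x
      exact round2 hn hm x
  have hcard1 := Nat.card_eq_of_bijective _ hbij
  have hS : ∀ b : Fin m,
      Nat.card {p : Fin n ⊕ Fin m → Fin n ⊕ Fin m //
        IsRootedMap (completeBipartiteGraph (Fin n) (Fin m)) (inr b) p} = T :=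
    fun b => card_rootedMap_eq_card_trees _ (inr b)
  -- compute the LHS of hcard1
  have hL : Nat.card ((Fin n → Fin m) × (Fin m → Fin n)) = m ^ n * n ^ m := by
    rw [Nat.card_prod, Nat.card_fun, Nat.card_fun]
    simp [Nat.card_eq_fintype_card]
  -- compute the RHS of hcard1
  haveI : ∀ b : Fin m, Fintype {p : Fin n ⊕ Fin m → Fin n ⊕ Fin m //
      IsRootedMap (completeBipartiteGraph (Fin n) (Fin m)) (inr b) p} :=
    fun b => Fintype.ofFinite _
  have hR : Nat.card (Fin n × Σ b : Fin m, {p : Fin n ⊕ Fin m → Fin n ⊕ Fin m //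
      IsRootedMap (completeBipartiteGraph (Fin n) (Fin m)) (inr b) p}) = n * (m * T) := by
    rw [Nat.card_prod, Nat.card_eq_fintype_card (α := Fin n), Fintype.card_fin]
    congr 1
    rw [Nat.card_eq_fintype_card, Fintype.card_sigma]
    have hsum : ∀ b : Fin m, Fintype.card {p : Fin n ⊕ Fin m → Fin n ⊕ Fin m //
        IsRootedMap (completeBipartiteGraph (Fin n) (Fin m)) (inr b) p} = T := by
      intro b
      rw [← Nat.card_eq_fintype_card]
      exact hS b
    rw [Finset.sum_congr rfl (fun b _ => hsum b), Finset.sum_const, Finset.card_univ,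
      Fintype.card_fin, smul_eq_mul]
  rw [← hL, hcard1, hR]

end B7

end CayleyBip

/-- Cayley's formula for complete bipartite graphs: the number of spanning trees of
`K_{n,m}` (with parts of sizes `n ≥ 1` and `m ≥ 1`) equals `n ^ (m - 1) * m ^ (n - 1)`. -/
theorem cayley_formula_bipartite (n m : ℕ) (hn : 1 ≤ n) (hm : 1 ≤ m) :
    Nat.card {H : SimpleGraph (Fin n ⊕ Fin m) //
        H ≤ completeBipartiteGraph (Fin n) (Fin m) ∧ H.IsTree} =
      n ^ (m - 1) * m ^ (n - 1) := by
  have h := CayleyBip.joyal_count (n := n) (m := m) hn hm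
  set T := Nat.card {H : SimpleGraph (Fin n ⊕ Fin m) //
    H ≤ completeBipartiteGraph (Fin n) (Fin m) ∧ H.IsTree} with hT
  have e1 : n ^ m = n * n ^ (m - 1) := by
    conv_lhs => rw [show m = (m - 1) + 1 by omega]
    rw [pow_succ']
  have e2 : m ^ n = m * m ^ (n - 1) := by
    conv_lhs => rw [show n = (n - 1) + 1 by omega]
    rw [pow_succ']
  have h2 : n * (m * T) = n * (m * (n ^ (m - 1) * m ^ (n - 1))) := by
    calc n * (m * T) = m ^ n * n ^ m := h.symm
      _ = n * (m * (n ^ (m - 1) * m ^ (n - 1))) := by rw [e1, e2]; ring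
  have h3 := Nat.eq_of_mul_eq_mul_left (show 0 < n by omega) h2
  exact Nat.eq_of_mul_eq_mul_left (show 0 < m by omega) h3
end

section
/- Ore's theorem: let G be a finite simple undirected graph on n ≥ 3 vertices such that for every pair of distinct non-adjacent vertices u and v, deg(u) + deg(v) ≥ n. Then G is Hamiltonian. -/
set_option linter.unusedSectionVars false
set_option linter.unusedVariables false

open Finset SimpleGraph

namespace OreAux

variable {V : Type*} [Fintype V] [DecidableEq V]



/-- A cyclic enumeration of the vertices realizing a Hamiltonian cycle. -/
def IsHamCycFn (G : SimpleGraph V) (n : ℕ) (f : ℕ → V) : Prop :=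
  Set.InjOn f (Set.Iio n) ∧ (∀ a, ∃ i < n, f i = a) ∧
    ∀ i < n, G.Adj (f i) (f ((i + 1) % n))

lemma surj_of_injOn {n : ℕ} (hn : Fintype.card V = n) (f : ℕ → V)
    (hinj : Set.InjOn f (Set.Iio n)) : ∀ a, ∃ i < n, f i = a := by
  intro a
  have hcard : ((Finset.range n).image f).card = n := by
    rw [Finset.card_image_of_injOn, Finset.card_range]
    intro x hx y hy hxy
    exact hinj (by simpa using hx) (by simpa using hy) hxy
  have : (Finset.range n).image f = Finset.univ :=
    Finset.eq_univ_of_card _ (by rw [hcard, hn])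
  have ha : a ∈ (Finset.range n).image f := this ▸ Finset.mem_univ a
  obtain ⟨i, hi, hfi⟩ := Finset.mem_image.mp ha
  exact ⟨i, by simpa using hi, hfi⟩

/-- Building a walk from a function with consecutive adjacencies. -/
def walkOfFn (G : SimpleGraph V) (F : ℕ → V) :
    (k : ℕ) → (∀ i < k, G.Adj (F i) (F (i + 1))) → G.Walk (F 0) (F k)
  | 0, _ => SimpleGraph.Walk.nil
  | (k + 1), h => (walkOfFn G F k (fun i hi => h i (by omega))).concat (h k (by omega))

lemma support_walkOfFn (G : SimpleGraph V) (F : ℕ → V) (k : ℕ)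
    (h : ∀ i < k, G.Adj (F i) (F (i + 1))) :
    (walkOfFn G F k h).support = (List.range (k + 1)).map F := by
  induction k with
  | zero => simp [walkOfFn, List.range_succ_eq_map]
  | succ k ih =>
      rw [walkOfFn, SimpleGraph.Walk.support_concat, ih, List.range_succ (n := k + 1)]
      simp

lemma edges_walkOfFn (G : SimpleGraph V) (F : ℕ → V) (k : ℕ)
    (h : ∀ i < k, G.Adj (F i) (F (i + 1))) :
    (walkOfFn G F k h).edges = (List.range k).map (fun i => s(F i, F (i + 1))) := by
  induction k with
  | zero => simp [walkOfFn]
  | succ k ih =>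
      rw [walkOfFn, SimpleGraph.Walk.edges_concat, ih, List.range_succ]
      simp

lemma isHamiltonian_of_fn {n : ℕ} (G : SimpleGraph V) (hn : Fintype.card V = n)
    (h3 : 3 ≤ n) (f : ℕ → V) (hf : IsHamCycFn G n f) : G.IsHamiltonian := by
  obtain ⟨hinj, hsurj, hadj⟩ := hf
  have hA : ∀ i, i < n - 1 → G.Adj (f i) (f (i + 1)) := fun i hi => by
    have := hadj i (by omega)
    rwa [Nat.mod_eq_of_lt (by omega)] at this
  have hW : G.Adj (f (n - 1)) (f 0) := by
    have := hadj (n - 1) (by omega)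
    rwa [Nat.sub_add_cancel (by omega), Nat.mod_self] at this
  set F : ℕ → V := fun i => f (i + 1) with hF
  have hFadj : ∀ i < n - 2, G.Adj (F i) (F (i + 1)) := fun i hi => hA (i + 1) (by omega)
  let q : G.Walk (f 1) (F (n - 2)) := walkOfFn G F (n - 2) hFadj
  let q' : G.Walk (f 1) (f (n - 1)) := q.copy rfl (congrArg f (by omega))
  let p : G.Walk (f 1) (f 0) := q'.concat hW
  have h01 : G.Adj (f 0) (f 1) := hA 0 (by omega)
  let c : G.Walk (f 0) (f 0) := SimpleGraph.Walk.cons h01 p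
  -- the index list
  set L : List ℕ := (List.range (n - 1)).map (· + 1) ++ [0] with hL
  have hsupp : p.support = L.map f := by
    show (q'.concat hW).support = _
    rw [SimpleGraph.Walk.support_concat, SimpleGraph.Walk.support_copy,
      support_walkOfFn, show n - 2 + 1 = n - 1 by omega, hL, List.map_append, List.map_map]
    simp [List.concat_eq_append]
    intro a _; rfl
  have hLlt : ∀ x ∈ L, x < n := by
    intro x hx
    rcases List.mem_append.mp hx with hx | hx
    · obtain ⟨i, hi, rfl⟩ := List.mem_map.mp hx
      simp only [List.mem_range] at hi; omega
    · simp at hx; omega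
  have hLnodup : L.Nodup := by
    rw [hL]
    refine List.Nodup.append ?_ (by simp) ?_
    · exact List.nodup_range.map (fun a b => by omega)
    · intro x hx hy
      obtain ⟨i, _, rfl⟩ := List.mem_map.mp hx
      simp at hy
  have hnodup : (L.map f).Nodup := by
    refine List.Nodup.map_on ?_ hLnodup
    intro x hx y hy hxy
    exact hinj (Set.mem_Iio.mpr (hLlt x hx)) (Set.mem_Iio.mpr (hLlt y hy)) hxy
  have hmem : ∀ a, a ∈ L.map f := by
    intro a
    obtain ⟨i, hi, rfl⟩ := hsurj a
    refine List.mem_map.mpr ⟨i, ?_, rfl⟩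
    rcases Nat.eq_zero_or_pos i with rfl | hip
    · simp [hL]
    · refine List.mem_append.mpr (Or.inl (List.mem_map.mpr ⟨i - 1, ?_, by omega⟩))
      simp only [List.mem_range]; omega
  have hcount : ∀ a, (L.map f).count a = 1 := by
    intro a
    have h1 := List.nodup_iff_count_le_one.mp hnodup a
    have h2 : 0 < (L.map f).count a := List.count_pos_iff.mpr (hmem a)
    omega
  have hinj' : ∀ i j, i < n → j < n → f i = f j → i = j := fun i j hi hj hij =>
    hinj (Set.mem_Iio.mpr hi) (Set.mem_Iio.mpr hj) hij
  have hedge : s(f 0, f 1) ∉ p.edges := by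
    intro hmem'
    have hpe : p.edges = ((List.range (n - 2)).map (fun i => s(F i, F (i + 1)))).concat
        s(f (n - 1), f 0) := by
      show (q'.concat hW).edges = _
      rw [SimpleGraph.Walk.edges_concat, SimpleGraph.Walk.edges_copy, edges_walkOfFn]
    rw [hpe, List.concat_eq_append, List.mem_append] at hmem'
    rcases hmem' with hmem' | hmem'
    · obtain ⟨i, hi, heq⟩ := List.mem_map.mp hmem'
      simp only [List.mem_range] at hi
      have heq' : s(f (i + 1), f (i + 2)) = s(f 0, f 1) := heq
      rcases Sym2.eq_iff.mp heq' with ⟨h1, h2⟩ | ⟨h1, h2⟩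
      · have := hinj' (i + 1) 0 (by omega) (by omega) h1; omega
      · have := hinj' (i + 2) 0 (by omega) (by omega) h2; omega
    · simp only [List.mem_singleton] at hmem'
      rcases Sym2.eq_iff.mp hmem' with ⟨h1, h2⟩ | ⟨h1, h2⟩
      · have := hinj' 0 (n - 1) (by omega) (by omega) h1; omega
      · have := hinj' 1 (n - 1) (by omega) (by omega) h2; omega
  have hpath : p.IsPath := SimpleGraph.Walk.IsPath.mk' (hsupp ▸ hnodup)
  have hcyc : c.IsHamiltonianCycle := by
    rw [SimpleGraph.Walk.isHamiltonianCycle_iff_isCycle_and_support_count_tail_eq_one]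
    constructor
    · exact (SimpleGraph.Walk.cons_isCycle_iff p h01).mpr ⟨hpath, hedge⟩
    · intro a
      have : c.support = f 0 :: p.support := SimpleGraph.Walk.support_cons h01 p
      rw [this, List.tail_cons, hsupp]
      exact hcount a
  exact fun _ => ⟨f 0, c, hcyc⟩

lemma support_eq_map_getVert {G : SimpleGraph V} {u v : V} (p : G.Walk u v) :
    p.support = (List.range (p.length + 1)).map p.getVert := by
  induction p with
  | nil => simp [List.range_succ_eq_map]
  | cons h q ih =>
      rw [SimpleGraph.Walk.support_cons, ih, SimpleGraph.Walk.length_cons,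
        List.range_succ_eq_map (n := q.length + 1), List.map_cons, List.map_map]
      simp [Function.comp_def, SimpleGraph.Walk.getVert_cons_succ]

lemma fn_of_isHamiltonian {n : ℕ} (G : SimpleGraph V) (hn : Fintype.card V = n)
    (h3 : 3 ≤ n) (hham : G.IsHamiltonian) : ∃ f, IsHamCycFn G n f := by
  obtain ⟨a, c, hc⟩ := hham (by omega)
  have hlen : c.length = n := by rw [hc.length_eq, hn]
  set f : ℕ → V := fun i => c.getVert (i + 1) with hfdef
  have htail : c.support.tail = (List.range n).map f := by
    rw [support_eq_map_getVert, hlen, List.range_succ_eq_map, List.map_cons, List.tail_cons,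
      List.map_map]
    rfl
  have hnodup : ((List.range n).map f).Nodup := htail ▸ hc.isCycle.support_nodup
  have hinj : Set.InjOn f (Set.Iio n) := by
    intro x hx y hy hxy
    exact List.inj_on_of_nodup_map hnodup (by simpa using hx) (by simpa using hy) hxy
  refine ⟨f, hinj, surj_of_injOn hn f hinj, ?_⟩
  intro i hi
  rcases Nat.lt_or_ge i (n - 1) with hi' | hi'
  · rw [Nat.mod_eq_of_lt (by omega)]
    exact c.adj_getVert_succ (by omega)
  · have hieq : i = n - 1 := by omega
    subst hieq
    rw [Nat.sub_add_cancel (by omega), Nat.mod_self]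
    have h1 : f (n - 1) = a := by
      show c.getVert (n - 1 + 1) = a
      rw [Nat.sub_add_cancel (by omega), ← hlen, SimpleGraph.Walk.getVert_length]
    have h2 : G.Adj (c.getVert 0) (c.getVert 1) := c.adj_getVert_succ (by omega)
    rw [h1]
    rw [SimpleGraph.Walk.getVert_zero] at h2
    exact h2

/-- The crossing argument: from a Hamiltonian path from `u` to `v`, where `u v` are
non-adjacent with degree sum at least `n`, produce a Hamiltonian cycle. -/
lemma crossing {n : ℕ} (G : SimpleGraph V) [DecidableRel G.Adj]
    (hn : Fintype.card V = n) (h3 : 3 ≤ n)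
    (u v : V) (hnadj : ¬G.Adj u v)
    (hdeg : n ≤ (Finset.univ.filter (G.Adj u ·)).card + (Finset.univ.filter (G.Adj v ·)).card)
    (g : ℕ → V) (hinj : Set.InjOn g (Set.Iio n))
    (hg0 : g 0 = u) (hg1 : g (n - 1) = v)
    (hpath : ∀ j < n - 1, G.Adj (g j) (g (j + 1))) :
    ∃ f, IsHamCycFn G n f := by
  have hsurj := surj_of_injOn hn g hinj
  have hinj' : ∀ a b, a < n → b < n → g a = g b → a = b := fun a b ha hb hab =>
    hinj (Set.mem_Iio.mpr ha) (Set.mem_Iio.mpr hb) hab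
  set S : Finset ℕ := (Finset.range (n - 1)).filter (fun i => G.Adj u (g (i + 1))) with hS
  set T : Finset ℕ := (Finset.range (n - 1)).filter (fun i => G.Adj v (g i)) with hT
  have hScard : S.card = (Finset.univ.filter (G.Adj u ·)).card := by
    refine Finset.card_bij (fun i _ => g (i + 1)) ?_ ?_ ?_
    · intro a ha
      simp only [hS, Finset.mem_filter, Finset.mem_range] at ha
      simp [ha.2]
    · intro a ha b hb hab
      simp only [hS, Finset.mem_filter, Finset.mem_range] at ha hb
      have := hinj' (a + 1) (b + 1) (by omega) (by omega) hab
      omega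
    · intro w hw
      simp only [Finset.mem_filter, Finset.mem_univ, true_and] at hw
      obtain ⟨j, hj, rfl⟩ := hsurj w
      have hj0 : j ≠ 0 := by
        intro h; subst h; rw [hg0] at hw; exact G.irrefl hw
      refine ⟨j - 1, ?_, show g (j - 1 + 1) = g j by rw [Nat.sub_add_cancel (by omega)]⟩
      simp only [hS, Finset.mem_filter, Finset.mem_range]
      constructor
      · omega
      · rw [Nat.sub_add_cancel (by omega)]; exact hw
  have hTcard : T.card = (Finset.univ.filter (G.Adj v ·)).card := by
    refine Finset.card_bij (fun i _ => g i) ?_ ?_ ?_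
    · intro a ha
      simp only [hT, Finset.mem_filter, Finset.mem_range] at ha
      simp [ha.2]
    · intro a ha b hb hab
      simp only [hT, Finset.mem_filter, Finset.mem_range] at ha hb
      exact hinj' a b (by omega) (by omega) hab
    · intro w hw
      simp only [Finset.mem_filter, Finset.mem_univ, true_and] at hw
      obtain ⟨j, hj, rfl⟩ := hsurj w
      have hjn : j ≠ n - 1 := by
        intro h; subst h; rw [hg1] at hw; exact G.irrefl hw
      refine ⟨j, ?_, rfl⟩
      simp only [hT, Finset.mem_filter, Finset.mem_range]
      exact ⟨by omega, hw⟩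
  have hUnion : (S ∪ T).card ≤ n - 1 := by
    have : S ∪ T ⊆ Finset.range (n - 1) := by
      intro x hx
      rcases Finset.mem_union.mp hx with hx | hx
      · exact Finset.mem_of_mem_filter _ hx
      · exact Finset.mem_of_mem_filter _ hx
    simpa using Finset.card_le_card this
  have hsum : S.card + T.card = (S ∪ T).card + (S ∩ T).card :=
    (Finset.card_union_add_card_inter S T).symm
  have hint : 0 < (S ∩ T).card := by omega
  obtain ⟨i, hi⟩ := Finset.card_pos.mp hint
  rw [Finset.mem_inter] at hi
  obtain ⟨hiS, hiT⟩ := hi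
  simp only [hS, Finset.mem_filter, Finset.mem_range] at hiS
  simp only [hT, Finset.mem_filter, Finset.mem_range] at hiT
  obtain ⟨hilt, hSu⟩ := hiS
  obtain ⟨-, hTv⟩ := hiT
  -- the new cyclic order
  refine ⟨fun j => if j ≤ i then g j else g (n + i - j), ?_, ?_, ?_⟩
  · intro a ha b hb heq
    simp only [Set.mem_Iio] at ha hb
    simp only at heq
    split_ifs at heq with h1 h2 h2
    · exact hinj' a b (by omega) (by omega) heq
    · have := hinj' a (n + i - b) (by omega) (by omega) heq; omega
    · have := hinj' (n + i - a) b (by omega) (by omega) heq; omega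
    · have := hinj' (n + i - a) (n + i - b) (by omega) (by omega) heq; omega
  · intro w
    obtain ⟨m, hm, rfl⟩ := hsurj w
    rcases le_or_gt m i with hmi | hmi
    · exact ⟨m, hm, by simp [hmi]⟩
    · refine ⟨n + i - m, by omega, ?_⟩
      show (if n + i - m ≤ i then g (n + i - m) else g (n + i - (n + i - m))) = g m
      rw [if_neg (by omega), show n + i - (n + i - m) = m by omega]
  · intro j hj
    dsimp only
    rcases Nat.lt_or_ge j i with hji | hji
    · rw [Nat.mod_eq_of_lt (by omega), if_pos (by omega), if_pos (by omega)]
      exact hpath j (by omega)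
    rcases Nat.eq_or_lt_of_le hji with rfl | hji'
    · rw [Nat.mod_eq_of_lt (by omega), if_pos le_rfl, if_neg (by omega),
        show n + i - (i + 1) = n - 1 by omega, hg1]
      exact hTv.symm
    rcases Nat.lt_or_ge j (n - 1) with hjn | hjn
    · rw [Nat.mod_eq_of_lt (by omega), if_neg (by omega), if_neg (by omega)]
      have := hpath (n + i - j - 1) (by omega)
      rw [show n + i - j - 1 + 1 = n + i - j by omega] at this
      rw [show n + i - (j + 1) = n + i - j - 1 by omega]
      exact this.symm
    · have hjeq : j = n - 1 := by omega
      subst hjeq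
      rw [show (n - 1 + 1) % n = 0 by rw [Nat.sub_add_cancel (by omega), Nat.mod_self],
        if_neg (by omega), if_pos (by omega), show n + i - (n - 1) = i + 1 by omega, hg0]
      exact hSu.symm

lemma mod_inj_shift {n a b k : ℕ} (ha : a < n) (hb : b < n)
    (h : (a + k) % n = (b + k) % n) : a = b := by
  have h' : a ≡ b [MOD n] := Nat.ModEq.add_right_cancel' k h
  rwa [Nat.ModEq, Nat.mod_eq_of_lt ha, Nat.mod_eq_of_lt hb] at h'

lemma complete_ham {n : ℕ} (hn : Fintype.card V = n) (h3 : 3 ≤ n)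
    (G : SimpleGraph V) (hcomp : ∀ a b : V, a ≠ b → G.Adj a b) : G.IsHamiltonian := by
  have hpos : 0 < n := by omega
  let e : V ≃ Fin n := Fintype.equivFinOfCardEq hn
  apply isHamiltonian_of_fn G hn h3 (fun i => e.symm ⟨i % n, Nat.mod_lt _ hpos⟩)
  refine ⟨?_, ?_, ?_⟩
  · intro a ha b hb heq
    simp only [Set.mem_Iio] at ha hb
    have := e.symm.injective heq
    have hval : a % n = b % n := congrArg Fin.val this
    rwa [Nat.mod_eq_of_lt ha, Nat.mod_eq_of_lt hb] at hval
  · intro a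
    refine ⟨(e a).val, (e a).isLt, ?_⟩
    have heq : (⟨(e a).val % n, Nat.mod_lt _ hpos⟩ : Fin n) = e a := by
      ext; simp [Nat.mod_eq_of_lt (e a).isLt]
    show e.symm ⟨(e a).val % n, Nat.mod_lt _ hpos⟩ = a
    rw [heq, Equiv.symm_apply_apply]
  · intro i hi
    apply hcomp
    intro heq
    have := e.symm.injective heq
    have hval : i % n = (i + 1) % n % n := congrArg Fin.val this
    rw [Nat.mod_eq_of_lt hi, Nat.mod_eq_of_lt (Nat.mod_lt _ hpos)] at hval
    rcases Nat.lt_or_ge i (n - 1) with h' | h'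
    · rw [Nat.mod_eq_of_lt (by omega)] at hval; omega
    · have : i = n - 1 := by omega
      subst this
      rw [Nat.sub_add_cancel (by omega), Nat.mod_self] at hval
      omega

lemma rotate_case {n : ℕ} (G G' : SimpleGraph V) [DecidableRel G.Adj]
    (hn : Fintype.card V = n) (h3 : 3 ≤ n) (u v : V) (hnadj : ¬G.Adj u v)
    (hdeg : n ≤ (Finset.univ.filter (G.Adj u ·)).card + (Finset.univ.filter (G.Adj v ·)).card)
    (hadj' : ∀ a b : V, G'.Adj a b → G.Adj a b ∨ s(a, b) = s(u, v))
    (f : ℕ → V) (hf : IsHamCycFn G' n f) (k : ℕ) (hk : k < n)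
    (hkv : f k = v) (hku : f ((k + 1) % n) = u) :
    ∃ h, IsHamCycFn G n h := by
  obtain ⟨hinj, hsurj, hadj⟩ := hf
  have hpos : 0 < n := by omega
  have hinj' : ∀ a b, a < n → b < n → f a = f b → a = b := fun a b ha hb hab =>
    hinj (Set.mem_Iio.mpr ha) (Set.mem_Iio.mpr hb) hab
  set g : ℕ → V := fun j => f ((j + (k + 1)) % n) with hg
  have ginj : Set.InjOn g (Set.Iio n) := by
    intro a ha b hb heq
    simp only [Set.mem_Iio] at ha hb
    have := hinj' _ _ (Nat.mod_lt _ hpos) (Nat.mod_lt _ hpos) heq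
    exact mod_inj_shift ha hb this
  have gsurj : ∀ a, ∃ i < n, g i = a := by
    intro a
    obtain ⟨i, hi, rfl⟩ := hsurj a
    rcases Nat.lt_or_ge i (k + 1) with h' | h'
    · refine ⟨i + n - (k + 1), by omega, ?_⟩
      show f ((i + n - (k + 1) + (k + 1)) % n) = f i
      rw [show i + n - (k + 1) + (k + 1) = i + n by omega, Nat.add_mod_right,
        Nat.mod_eq_of_lt hi]
    · refine ⟨i - (k + 1), by omega, ?_⟩
      show f ((i - (k + 1) + (k + 1)) % n) = f i
      rw [Nat.sub_add_cancel h', Nat.mod_eq_of_lt hi]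
  have hg0 : g 0 = u := by
    show f ((0 + (k + 1)) % n) = u
    rw [Nat.zero_add]; exact hku
  have hg1 : g (n - 1) = v := by
    show f ((n - 1 + (k + 1)) % n) = v
    rw [show n - 1 + (k + 1) = k + n by omega, Nat.add_mod_right, Nat.mod_eq_of_lt hk]
    exact hkv
  have gadj' : ∀ j < n - 1, G'.Adj (g j) (g (j + 1)) := by
    intro j hj
    have h1 := hadj ((j + (k + 1)) % n) (Nat.mod_lt _ hpos)
    have h2 : ((j + (k + 1)) % n + 1) % n = (j + 1 + (k + 1)) % n := by
      rw [Nat.mod_add_mod, show j + (k + 1) + 1 = j + 1 + (k + 1) by omega]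
    rw [h2] at h1
    exact h1
  have gpath : ∀ j < n - 1, G.Adj (g j) (g (j + 1)) := by
    intro j hj
    rcases hadj' _ _ (gadj' j hj) with h | h
    · exact h
    · exfalso
      have hA : (j + (k + 1)) % n < n := Nat.mod_lt _ hpos
      have hB : (j + 1 + (k + 1)) % n < n := Nat.mod_lt _ hpos
      have hkun : u = f ((k + 1) % n) := hku.symm
      have hkvn : v = f k := hkv.symm
      rcases Sym2.eq_iff.mp h with ⟨e1, e2⟩ | ⟨e1, e2⟩
      · -- g j = u, g (j+1) = v
        rw [hkun] at e1
        have hj0 : j = 0 := by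
          have := hinj' _ _ hA (Nat.mod_lt _ hpos) e1
          have : (j + (k + 1)) % n = (0 + (k + 1)) % n := by rwa [Nat.zero_add]
          exact mod_inj_shift (by omega) hpos this
        subst hj0
        rw [hkvn] at e2
        have := hinj' _ _ hB hk e2
        have h20 : (2 + k) % n = (0 + k) % n := by
          rw [Nat.zero_add, Nat.mod_eq_of_lt hk, show 2 + k = 0 + 1 + (k + 1) by omega]
          exact this
        have := mod_inj_shift (by omega) (by omega) h20
        omega
      · -- g j = v
        rw [hkvn] at e1
        have := hinj' _ _ hA hk e1
        have h10 : (j + 1 + k) % n = (0 + k) % n := by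
          rw [Nat.zero_add, Nat.mod_eq_of_lt hk, show j + 1 + k = j + (k + 1) by omega]
          exact this
        have := mod_inj_shift (by omega) hpos h10
        omega
  exact crossing G hn h3 u v hnadj hdeg g ginj hg0 hg1 gpath

lemma ore_aux {n : ℕ} (hn : Fintype.card V = n) (h3 : 3 ≤ n) :
    ∀ (m : ℕ) (G : SimpleGraph V) [DecidableRel G.Adj],
      {p : V × V | p.1 ≠ p.2 ∧ ¬G.Adj p.1 p.2}.ncard ≤ m →
      (∀ u v : V, u ≠ v → ¬G.Adj u v →
        n ≤ (Finset.univ.filter (G.Adj u ·)).card + (Finset.univ.filter (G.Adj v ·)).card) →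
      G.IsHamiltonian := by
  intro m
  induction m with
  | zero =>
      intro G instG hcard hore
      have hempty : {p : V × V | p.1 ≠ p.2 ∧ ¬G.Adj p.1 p.2} = ∅ :=
        (Set.ncard_eq_zero (Set.toFinite _)).mp (le_antisymm hcard (Nat.zero_le _))
      apply complete_ham hn h3
      intro a b hab
      by_contra hnadj
      have hmem : (a, b) ∈ {p : V × V | p.1 ≠ p.2 ∧ ¬G.Adj p.1 p.2} := ⟨hab, hnadj⟩
      rw [hempty] at hmem
      exact hmem
  | succ m ih =>
      intro G instG hcard hore
      by_cases hcomp : ∀ a b : V, a ≠ b → G.Adj a b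
      · exact complete_ham hn h3 G hcomp
      push_neg at hcomp
      obtain ⟨u, v, hne, hnadj⟩ := hcomp
      set G' := G ⊔ SimpleGraph.fromEdgeSet {s(u, v)} with hG'
      have hadj' : ∀ a b : V, G'.Adj a b ↔ G.Adj a b ∨ (s(a, b) = s(u, v) ∧ a ≠ b) := by
        intro a b
        rw [hG', SimpleGraph.sup_adj, SimpleGraph.fromEdgeSet_adj, Set.mem_singleton_iff]
      haveI instG' : DecidableRel G'.Adj := fun a b =>
        decidable_of_iff _ (hadj' a b).symm
      have hle : ∀ a b : V, G.Adj a b → G'.Adj a b := fun a b h => (hadj' a b).mpr (Or.inl h)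
      have huv' : G'.Adj u v := (hadj' u v).mpr (Or.inr ⟨rfl, hne⟩)
      have hss : {p : V × V | p.1 ≠ p.2 ∧ ¬G'.Adj p.1 p.2} ⊂
          {p : V × V | p.1 ≠ p.2 ∧ ¬G.Adj p.1 p.2} := by
        constructor
        · rintro ⟨a, b⟩ ⟨h1, h2⟩
          exact ⟨h1, fun h => h2 (hle a b h)⟩
        · intro hsub
          have hmem := hsub (show (u, v) ∈ _ from ⟨hne, hnadj⟩)
          exact hmem.2 huv'
      have hcard' : {p : V × V | p.1 ≠ p.2 ∧ ¬G'.Adj p.1 p.2}.ncard ≤ m := by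
        have := Set.ncard_lt_ncard hss (Set.toFinite _)
        omega
      have hore' : ∀ a b : V, a ≠ b → ¬G'.Adj a b →
          n ≤ (Finset.univ.filter (G'.Adj a ·)).card + (Finset.univ.filter (G'.Adj b ·)).card := by
        intro a b hab hnadj'
        have hnadjG : ¬G.Adj a b := fun h => hnadj' (hle a b h)
        refine le_trans (hore a b hab hnadjG) (Nat.add_le_add ?_ ?_) <;>
          exact Finset.card_le_card (fun x hx => by
            simp only [Finset.mem_filter] at hx ⊢
            exact ⟨hx.1, hle _ _ hx.2⟩)
      have hham' : G'.IsHamiltonian := ih G' hcard' hore'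
      obtain ⟨f, hf⟩ := fn_of_isHamiltonian G' hn h3 hham'
      have hadj'' : ∀ a b : V, G'.Adj a b → G.Adj a b ∨ s(a, b) = s(u, v) :=
        fun a b h => ((hadj' a b).mp h).imp id And.left
      by_cases hedge : ∃ kk, kk < n ∧ s(f kk, f ((kk + 1) % n)) = s(u, v)
      · obtain ⟨kk, hkk, hkeq⟩ := hedge
        have hfn : ∃ h, IsHamCycFn G n h := by
          rcases Sym2.eq_iff.mp hkeq with ⟨h1, h2⟩ | ⟨h1, h2⟩
          · -- f kk = u, f ((kk+1)%n) = v : swap roles of u and v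
            refine rotate_case G G' hn h3 v u (fun h => hnadj h.symm) ?_ ?_ f
              ⟨hf.1, hf.2.1, hf.2.2⟩ kk hkk h1 h2
            · rw [Nat.add_comm]
              exact hore u v hne hnadj
            · intro a b h
              exact (hadj'' a b h).imp id (fun e => e.trans (Sym2.eq_swap))
          · exact rotate_case G G' hn h3 u v hnadj (hore u v hne hnadj) hadj'' f hf kk hkk h1 h2
        obtain ⟨h, hh⟩ := hfn
        exact isHamiltonian_of_fn G hn h3 h hh
      · push_neg at hedge
        apply isHamiltonian_of_fn G hn h3 f
        obtain ⟨hinj, hsurj, hadjf⟩ := hf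
        refine ⟨hinj, hsurj, fun i hi => ?_⟩
        rcases hadj'' _ _ (hadjf i hi) with h | h
        · exact h
        · exact absurd h (hedge i hi)


end OreAux

/-- Ore's theorem: if `G` is a finite simple undirected graph on `n ≥ 3` vertices
such that every pair of distinct non-adjacent vertices has degree sum at least `n`,
then `G` is Hamiltonian. -/
theorem ore_theorem {V : Type*} [Fintype V] [DecidableEq V]
    (G : SimpleGraph V) [DecidableRel G.Adj] (n : ℕ)
    (hn : Fintype.card V = n) (h3 : 3 ≤ n)
    (h : ∀ u v : V, u ≠ v → ¬G.Adj u v → n ≤ G.degree u + G.degree v) :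
    G.IsHamiltonian := by
  apply OreAux.ore_aux hn h3 ({p : V × V | p.1 ≠ p.2 ∧ ¬G.Adj p.1 p.2}.ncard) G le_rfl
  intro u v hne hnadj
  have hd := h u v hne hnadj
  have hu : G.degree u = (Finset.univ.filter (G.Adj u ·)).card := by
    rw [SimpleGraph.degree, SimpleGraph.neighborFinset_eq_filter]
  have hv : G.degree v = (Finset.univ.filter (G.Adj v ·)).card := by
    rw [SimpleGraph.degree, SimpleGraph.neighborFinset_eq_filter]
  rw [hu, hv] at hd
  exact hd
end

section
/- Dirac's theorem: let G be a finite simple undirected graph on n ≥ 3 vertices such that every vertex has degree at least n/2. Then G is Hamiltonian. -/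
namespace DiracAux

open Finset List SimpleGraph

set_option linter.unusedSectionVars false

variable {V : Type*} [DecidableEq V]

def badIf (G : SimpleGraph V) [DecidableRel G.Adj] (x y : V) : ℕ := if G.Adj x y then 0 else 1

lemma badIf_comm (G : SimpleGraph V) [DecidableRel G.Adj] (x y : V) :
    badIf G x y = badIf G y x := by
  simp [badIf, G.adj_comm]

def bc (G : SimpleGraph V) [DecidableRel G.Adj] (d : V) (l : List V) : ℕ :=
  ∑ j ∈ Finset.range l.length, badIf G (l.getD j d) (l.getD ((j+1) % l.length) d)

lemma getD_rotate (l : List V) (d : V) (k j : ℕ) (hj : j < l.length) :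
    (l.rotate k).getD j d = l.getD ((j + k) % l.length) d := by
  rw [List.getD_eq_getElem _ _ (by rw [List.length_rotate]; exact hj),
    List.getD_eq_getElem _ _ (Nat.mod_lt _ (by omega))]
  exact List.getElem_rotate l k j (by rw [List.length_rotate]; exact hj)

lemma bc_rotate_one (G : SimpleGraph V) [DecidableRel G.Adj] (d : V) (l : List V) :
    bc G d (l.rotate 1) = bc G d l := by
  rcases l.eq_nil_or_concat with rfl | _
  · simp [bc]
  have hn : 0 < l.length := by
    rcases l with _ | _
    · simp_all
    · simp
  set n := l.length with hnl
  set F : ℕ → ℕ := fun i => badIf G (l.getD (i % n) d) (l.getD ((i+1) % n) d) with hF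
  have key : ∀ j < n, badIf G ((l.rotate 1).getD j d) ((l.rotate 1).getD ((j+1) % n) d) = F (j+1) := by
    intro j hj
    rw [getD_rotate l d 1 j hj, getD_rotate l d 1 ((j+1) % n) (Nat.mod_lt _ hn)]
    simp only [hF]
    congr 1
    · rw [Nat.mod_add_mod]
  have hrl : (l.rotate 1).length = n := by rw [List.length_rotate]
  have h1 : bc G d (l.rotate 1) = ∑ j ∈ Finset.range n, F (j+1) := by
    rw [bc, hrl]
    exact Finset.sum_congr rfl fun j hj => key j (Finset.mem_range.1 hj)
  have h2 : bc G d l = ∑ j ∈ Finset.range n, F j := by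
    rw [bc, ← hnl]
    refine Finset.sum_congr rfl fun j hj => ?_
    simp only [hF]
    rw [Nat.mod_eq_of_lt (Finset.mem_range.1 hj)]
  have hFn : F n = F 0 := by
    have hmm : (n+1) % n = 1 % n := Nat.add_mod_left n 1
    simp only [hF, Nat.mod_self, Nat.zero_mod, Nat.zero_add, hmm]
  have : ∑ j ∈ Finset.range n, F (j+1) + F 0 = ∑ j ∈ Finset.range n, F j + F n := by
    rw [← Finset.sum_range_succ, ← Finset.sum_range_succ']
  rw [h1, h2]
  omega

lemma bc_rotate (G : SimpleGraph V) [DecidableRel G.Adj] (d : V) (l : List V) (k : ℕ) :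
    bc G d (l.rotate k) = bc G d l := by
  induction k with
  | zero => rw [List.rotate_zero]
  | succ k ih =>
    have : l.rotate (k+1) = (l.rotate k).rotate 1 := by rw [List.rotate_rotate]
    rw [this, bc_rotate_one, ih]

lemma pigeon [Fintype V] (G : SimpleGraph V) [DecidableRel G.Adj] (d : V) (l : List V)
    (hnd : l.Nodup) (hall : ∀ v : V, v ∈ l) (h3 : 3 ≤ l.length)
    (hdeg : ∀ v : V, l.length ≤ 2 * G.degree v)
    (hbad : ¬ G.Adj (l.getD 0 d) (l.getD 1 d)) :
    ∃ i, 2 ≤ i ∧ i + 2 ≤ l.length ∧ G.Adj (l.getD 0 d) (l.getD i d) ∧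
      G.Adj (l.getD 1 d) (l.getD (i+1) d) := by
  set n := l.length with hn
  set v0 := l.getD 0 d with hv0
  set v1 := l.getD 1 d with hv1
  have hidx : ∀ w : V, l.idxOf w < n ∧ l.getD (l.idxOf w) d = w := by
    intro w
    have h1 : l.idxOf w < l.length := List.idxOf_lt_length_iff.2 (hall w)
    exact ⟨h1, by rw [List.getD_eq_getElem _ _ h1, List.getElem_idxOf]⟩
  have hinj : ∀ w1 w2 : V, l.idxOf w1 = l.idxOf w2 → w1 = w2 := by
    intro w1 w2 he
    have := (hidx w1).2
    rw [he, (hidx w2).2] at this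
    exact this.symm
  set A := (Finset.Ico 2 n).filter (fun i => G.Adj v0 (l.getD i d)) with hA
  set B := (Finset.Ico 1 (n-1)).filter (fun i => G.Adj v1 (l.getD (i+1) d)) with hB
  have hcardA : G.degree v0 ≤ A.card := by
    rw [← G.card_neighborFinset_eq_degree]
    apply Finset.card_le_card_of_injOn (fun w => l.idxOf w)
    · intro w hw
      rw [Finset.mem_coe, SimpleGraph.mem_neighborFinset] at hw
      have hi0 : l.idxOf w ≠ 0 := by
        intro h0
        have := (hidx w).2
        rw [h0, ← hv0] at this
        exact G.loopless.irrefl v0 (this ▸ hw)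
      have hi1 : l.idxOf w ≠ 1 := by
        intro h1
        have := (hidx w).2
        rw [h1, ← hv1] at this
        exact hbad (this ▸ hw)
      rw [Finset.mem_coe, hA, Finset.mem_filter, Finset.mem_Ico]
      beta_reduce
      exact ⟨⟨by omega, (hidx w).1⟩, by rw [(hidx w).2]; exact hw⟩
    · intro w1 _ w2 _ he
      exact hinj _ _ he
  have hcardB : G.degree v1 ≤ B.card := by
    rw [← G.card_neighborFinset_eq_degree]
    apply Finset.card_le_card_of_injOn (fun w => l.idxOf w - 1)
    · intro w hw
      rw [Finset.mem_coe, SimpleGraph.mem_neighborFinset] at hw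
      have hi0 : l.idxOf w ≠ 0 := by
        intro h0
        have := (hidx w).2
        rw [h0, ← hv0] at this
        exact hbad (this ▸ (hw.symm))
      have hi1 : l.idxOf w ≠ 1 := by
        intro h1
        have := (hidx w).2
        rw [h1, ← hv1] at this
        exact G.loopless.irrefl v1 (this ▸ hw)
      have hlt := (hidx w).1
      rw [Finset.mem_coe, hB, Finset.mem_filter, Finset.mem_Ico]
      beta_reduce
      refine ⟨⟨by omega, by omega⟩, ?_⟩
      have : l.idxOf w - 1 + 1 = l.idxOf w := by omega
      rw [this, (hidx w).2]
      exact hw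
    · intro w1 hw1 w2 hw2 he
      rw [Finset.mem_coe, SimpleGraph.mem_neighborFinset] at hw1 hw2
      have he' : l.idxOf w1 - 1 = l.idxOf w2 - 1 := he
      have h1 : l.idxOf w1 ≠ 0 := by
        intro h0
        have := (hidx w1).2
        rw [h0, ← hv0] at this
        exact hbad (this ▸ (hw1.symm))
      have h2 : l.idxOf w2 ≠ 0 := by
        intro h0
        have := (hidx w2).2
        rw [h0, ← hv0] at this
        exact hbad (this ▸ (hw2.symm))
      exact hinj _ _ (by omega)
  have hunion : (A ∪ B) ⊆ Finset.Ico 1 n := by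
    intro i hi
    rw [Finset.mem_union, hA, hB, Finset.mem_filter, Finset.mem_filter,
      Finset.mem_Ico, Finset.mem_Ico] at hi
    rw [Finset.mem_Ico]
    omega
  have hcardU : (A ∪ B).card ≤ n - 1 := by
    have := Finset.card_le_card hunion
    simpa using this
  have hsum : n ≤ A.card + B.card := by
    have h0 := hdeg v0
    have h1 := hdeg v1
    omega
  have hinter : (A ∩ B).Nonempty := by
    rw [← Finset.card_pos]
    have := Finset.card_union_add_card_inter A B
    omega
  obtain ⟨i, hi⟩ := hinter
  rw [Finset.mem_inter, hA, hB, Finset.mem_filter, Finset.mem_filter,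
    Finset.mem_Ico, Finset.mem_Ico] at hi
  exact ⟨i, hi.1.1.1, by omega, hi.1.2, hi.2.2⟩

lemma getDcons (a : V) (m : List V) (d : V) (j : ℕ) (h : 1 ≤ j) :
    (a :: m).getD j d = m.getD (j-1) d := by
  obtain ⟨k, rfl⟩ : ∃ k, j = k + 1 := ⟨j - 1, by omega⟩
  simp

lemma getDappL (s t : List V) (d : V) (x : ℕ) (h : x < s.length) :
    (s ++ t).getD x d = s.getD x d := by
  rw [List.getD_eq_getElem _ _ (by rw [List.length_append]; omega),
    List.getD_eq_getElem _ _ h, List.getElem_append_left h]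

lemma getDappR (s t : List V) (d : V) (x : ℕ) (h : s.length ≤ x) :
    (s ++ t).getD x d = t.getD (x - s.length) d := by
  simp only [List.getD_eq_getElem?_getD]
  rw [List.getElem?_append_right h]

lemma getDrev (s : List V) (d : V) (x : ℕ) (h : x < s.length) :
    s.reverse.getD x d = s.getD (s.length - 1 - x) d := by
  rw [List.getD_eq_getElem _ _ (by rw [List.length_reverse]; omega),
    List.getD_eq_getElem _ _ (by omega), List.getElem_reverse]

lemma getDtake (m : List V) (d : V) (i x : ℕ) (h : x < i) (h2 : x < m.length) :
    (m.take i).getD x d = m.getD x d := by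
  rw [List.getD_eq_getElem _ _ (by rw [List.length_take]; omega),
    List.getD_eq_getElem _ _ h2, List.getElem_take]

lemma getDdrop (m : List V) (d : V) (i x : ℕ) :
    (m.drop i).getD x d = m.getD (i + x) d := by
  simp only [List.getD_eq_getElem?_getD]
  rw [List.getElem?_drop]

lemma reversal (G : SimpleGraph V) [DecidableRel G.Adj] (d a : V) (m : List V) (i : ℕ)
    (h2 : 2 ≤ i) (hi : i + 2 ≤ (a :: m).length)
    (hA : G.Adj a ((a :: m).getD i d))
    (hB : G.Adj ((a :: m).getD 1 d) ((a :: m).getD (i+1) d))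
    (hbad : ¬ G.Adj a ((a :: m).getD 1 d)) :
    ∃ l' : List V, l'.Perm (a :: m) ∧ bc G d l' < bc G d (a :: m) := by
  classical
  set l : List V := a :: m with hl
  set n := l.length with hn
  have hnm : m.length + 1 = n := by simp [hn, hl]
  have him : i < m.length := by omega
  set l' : List V := a :: ((m.take i).reverse ++ m.drop i) with hl'
  have hperm : l'.Perm l := by
    refine List.Perm.cons a ?_
    calc (m.take i).reverse ++ m.drop i
        ~ m.take i ++ m.drop i := List.Perm.append_right _ (List.reverse_perm _)
      _ = m := List.take_append_drop i m
  have hlen' : l'.length = n := hperm.length_eq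
  have hlentake : (m.take i).length = i := by rw [List.length_take]; omega
  have hlenrev : (m.take i).reverse.length = i := by rw [List.length_reverse, hlentake]
  have hg'0 : l'.getD 0 d = l.getD 0 d := rfl
  have hmcons : ∀ j, 1 ≤ j → l.getD j d = m.getD (j-1) d := fun j hj => getDcons a m d j hj
  have hseg : ∀ j, 1 ≤ j → j ≤ i → l'.getD j d = l.getD (i+1-j) d := by
    intro j hj1 hji
    rw [hl', getDcons _ _ _ _ hj1, getDappL _ _ _ _ (by omega),
      getDrev _ _ _ (by omega), hlentake,
      getDtake _ _ _ _ (by omega) (by omega), hmcons (i+1-j) (by omega)]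
    congr 1
    omega
  have htail : ∀ j, i + 1 ≤ j → l'.getD j d = l.getD j d := by
    intro j hji
    rw [hl', getDcons _ _ _ _ (by omega), getDappR _ _ _ _ (by omega),
      getDdrop, hmcons j (by omega)]
    congr 1
    omega
  refine ⟨l', hperm, ?_⟩
  set τ : ℕ → ℕ := fun j => if j ≤ i then i - j else j with hτ
  set bad : ℕ → ℕ := fun j => badIf G (l.getD j d) (l.getD ((j+1) % n) d) with hbadf
  set bad' : ℕ → ℕ := fun j => badIf G (l'.getD j d) (l'.getD ((j+1) % n) d) with hbadf'
  have hbc : bc G d l = ∑ j ∈ Finset.range n, bad j := rfl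
  have hbc' : bc G d l' = ∑ j ∈ Finset.range n, bad' j := by
    rw [bc, hlen']
  have htau_sum : ∑ j ∈ Finset.range n, bad (τ j) = ∑ j ∈ Finset.range n, bad j := by
    refine Finset.sum_nbij' τ τ ?_ ?_ ?_ ?_ ?_
    · intro j hj
      rw [Finset.mem_range] at *
      simp only [hτ]
      split <;> omega
    · intro j hj
      rw [Finset.mem_range] at *
      simp only [hτ]
      split <;> omega
    · intro j hj
      simp only [hτ]
      by_cases hc : j ≤ i
      · rw [if_pos hc, if_pos (by omega)]; omega
      · rw [if_neg hc, if_neg hc]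
    · intro j hj
      simp only [hτ]
      by_cases hc : j ≤ i
      · rw [if_pos hc, if_pos (by omega)]; omega
      · rw [if_neg hc, if_neg hc]
    · intro j hj
      rfl
  have hle : ∀ j ∈ Finset.range n, bad' j ≤ bad (τ j) := by
    intro j hj
    rw [Finset.mem_range] at hj
    rcases Nat.lt_or_ge j 1 with hj0 | hj1
    · -- j = 0
      have : j = 0 := by omega
      subst this
      have : bad' 0 = 0 := by
        simp only [hbadf', badIf]
        rw [if_pos]
        rw [Nat.mod_eq_of_lt (by omega), hseg 1 le_rfl (by omega), hg'0]
        exact hA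
      omega
    rcases Nat.lt_or_ge j i with hji | hjge
    · -- 1 ≤ j ≤ i-1
      have hτj : τ j = i - j := by simp only [hτ]; rw [if_pos (by omega)]
      have e1 : bad' j = badIf G (l.getD (i+1-j) d) (l.getD (i-j) d) := by
        simp only [hbadf']
        rw [Nat.mod_eq_of_lt (by omega), hseg j hj1 (by omega), hseg (j+1) (by omega) (by omega)]
        congr 2
        omega
      have e2 : bad (τ j) = badIf G (l.getD (i-j) d) (l.getD (i+1-j) d) := by
        simp only [hbadf]
        rw [hτj, Nat.mod_eq_of_lt (by omega)]
        congr 2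
        omega
      rw [e1, e2, badIf_comm]
    rcases Nat.eq_or_lt_of_le hjge with hjeq | hjgt
    · -- j = i
      have : bad' j = 0 := by
        simp only [hbadf', badIf]
        rw [if_pos]
        rw [Nat.mod_eq_of_lt (by omega), ← hjeq, hseg i (by omega) le_rfl,
          htail (i+1) le_rfl]
        have : i + 1 - i = 1 := by omega
        rw [this]
        exact hB
      omega
    · -- i < j < n
      have hτj : τ j = j := by simp only [hτ]; rw [if_neg (by omega)]
      rw [hτj]
      have e1 : l'.getD j d = l.getD j d := htail j (by omega)
      rcases Nat.lt_or_ge j (n-1) with hlt | hge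
      · have : (j+1) % n = j + 1 := Nat.mod_eq_of_lt (by omega)
        simp only [hbadf', hbadf, this, e1, htail (j+1) (by omega)]
        exact le_rfl
      · have hjn : j = n - 1 := by omega
        have : (j+1) % n = 0 := by
          subst hjn
          rw [show n - 1 + 1 = n by omega, Nat.mod_self]
        simp only [hbadf', hbadf, this, e1, hg'0]
        exact le_rfl
  have hstrict : ∃ j ∈ Finset.range n, bad' j < bad (τ j) := by
    refine ⟨i, Finset.mem_range.2 (by omega), ?_⟩
    have h1 : bad' i = 0 := by
      simp only [hbadf', badIf]
      rw [if_pos]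
      rw [Nat.mod_eq_of_lt (by omega), hseg i (by omega) le_rfl, htail (i+1) le_rfl]
      have : i + 1 - i = 1 := by omega
      rw [this]
      exact hB
    have hτi : τ i = 0 := by simp only [hτ]; rw [if_pos le_rfl]; omega
    have h2 : bad (τ i) = 1 := by
      rw [hτi]
      simp only [hbadf, badIf]
      rw [if_neg]
      rw [Nat.mod_eq_of_lt (by omega)]
      exact hbad
    omega
  calc bc G d l' = ∑ j ∈ Finset.range n, bad' j := hbc'
    _ < ∑ j ∈ Finset.range n, bad (τ j) := Finset.sum_lt_sum hle hstrict
    _ = ∑ j ∈ Finset.range n, bad j := htau_sum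
    _ = bc G d l := hbc.symm

lemma walk_of_chain (G : SimpleGraph V) : ∀ (m : List V) (a b : V), List.Chain G.Adj a m →
    (a :: m).getLast (List.cons_ne_nil _ _) = b → ∃ w : G.Walk a b, w.support = a :: m := by
  intro m
  induction m with
  | nil =>
    intro a b _ hb
    simp only [List.getLast_singleton] at hb
    subst hb
    exact ⟨SimpleGraph.Walk.nil, rfl⟩
  | cons c m' ih =>
    intro a b hch hb
    unfold List.Chain at hch
    rw [List.chain_cons] at hch
    have hb' : (c :: m').getLast (List.cons_ne_nil _ _) = b := by
      rw [← hb, List.getLast_cons (List.cons_ne_nil _ _)]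
    obtain ⟨w, hw⟩ := ih c b hch.2 hb'
    exact ⟨SimpleGraph.Walk.cons hch.1 w, by simp [hw]⟩

lemma edge_start (G : SimpleGraph V) {u v x : V} (p : G.Walk u v) (hp : p.IsPath)
    (he : s(x, u) ∈ p.edges) :
    ∃ (q : G.Walk x v) (h : G.Adj u x), p = SimpleGraph.Walk.cons h q := by
  cases p with
  | nil => simp at he
  | @cons _ w _ h' q' =>
    rw [SimpleGraph.Walk.edges_cons, List.mem_cons] at he
    rcases he with he | he
    · have hxw : x = w := by
        rw [Sym2.eq_iff] at he
        rcases he with ⟨h1, h2⟩ | ⟨h1, _⟩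
        · exact absurd h2 h'.ne
        · exact h1
      subst hxw
      exact ⟨q', h', rfl⟩
    · exfalso
      have hu : u ∈ q'.support := q'.snd_mem_support_of_mem_edges he
      rw [SimpleGraph.Walk.cons_isPath_iff] at hp
      exact hp.2 hu

lemma ham_of_zero [Fintype V] (G : SimpleGraph V) [DecidableRel G.Adj] (d : V) (l : List V)
    (hnd : l.Nodup) (hall : ∀ v : V, v ∈ l) (h3 : 3 ≤ l.length)
    (hadj : ∀ j < l.length, G.Adj (l.getD j d) (l.getD ((j+1) % l.length) d)) :
    G.IsHamiltonian := by
  classical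
  intro _
  rcases l with _ | ⟨a, _ | ⟨c, rest⟩⟩
  · simp at h3
  · simp at h3
  set l : List V := a :: c :: rest with hl
  set n := l.length with hn
  have hn2 : n = rest.length + 2 := by simp [hn, hl]
  set t : List V := c :: (rest ++ [a]) with hT
  have htl : t.length = n := by simp [hT, hn2]
  have htapp : t = (c :: rest) ++ [a] := rfl
  have ht : ∀ j, j < n → t.getD j d = l.getD ((j+1) % n) d := by
    intro j hj
    rcases Nat.lt_or_ge j (n-1) with hlt | hge
    · rw [show (j+1) % n = j + 1 from Nat.mod_eq_of_lt (by omega), htapp,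
        getDappL (c :: rest) [a] d j (by simp; omega),
        hl, getDcons a (c :: rest) d (j+1) (by omega)]
      congr 1
    · have hj' : j = n - 1 := by omega
      have hmod : (j+1) % n = 0 := by
        subst hj'
        rw [show n - 1 + 1 = n by omega, Nat.mod_self]
      rw [hmod, htapp, getDappR _ _ _ _ (by simp; omega)]
      have : j - (c :: rest).length = 0 := by simp; omega
      rw [this]
      rfl
  have hchain : List.Chain G.Adj c (rest ++ [a]) := by
    have hch' : List.Chain' G.Adj t := by
      unfold List.Chain'
      rw [List.isChain_iff_getElem]
      intro j hjlt
      have hjn : j < n - 1 := by rw [htl] at hjlt; omega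
      rw [← List.getD_eq_getElem _ d, ← List.getD_eq_getElem _ d,
        ht j (by omega), ht (j+1) (by omega),
        Nat.mod_eq_of_lt (show j + 1 < n by omega)]
      exact hadj (j+1) (by omega)
    exact hch'
  have hlast : (c :: (rest ++ [a])).getLast (List.cons_ne_nil _ _) = a := by
    rw [List.getLast_eq_getElem, ← List.getD_eq_getElem _ d]
    have hlen : (c :: (rest ++ [a])).length - 1 = n - 1 := by
      rw [← hT, htl]
    rw [hlen, ← hT, ht (n-1) (by omega),
      show (n - 1 + 1) % n = 0 by rw [show n - 1 + 1 = n by omega, Nat.mod_self]]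
    rfl
  obtain ⟨p, hps⟩ := walk_of_chain G (rest ++ [a]) c a hchain hlast
  have hadj_ac : G.Adj a c := by
    have h01 := hadj 0 (by omega)
    rw [show (0 + 1) % n = 1 from Nat.mod_eq_of_lt (by omega)] at h01
    exact h01
  have hperm_t : t.Perm l := by
    rw [htapp, hl]
    have := List.perm_append_comm (l₁ := c :: rest) (l₂ := [a])
    simpa using this
  have hnodup_t : t.Nodup := hperm_t.nodup_iff.2 hnd
  have hp_path : p.IsPath := SimpleGraph.Walk.IsPath.mk' (by rw [hps, ← hT]; exact hnodup_t)
  have hedge : s(a, c) ∉ p.edges := by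
    intro he
    obtain ⟨q, hq, rfl⟩ := edge_start G p hp_path he
    have hq_path : q.IsPath := ((SimpleGraph.Walk.cons_isPath_iff _ _).1 hp_path).1
    have hq_nil : q = SimpleGraph.Walk.nil := (SimpleGraph.Walk.isPath_iff_eq_nil (p := q)).1 hq_path
    subst hq_nil
    simp only [SimpleGraph.Walk.support_cons, SimpleGraph.Walk.support_nil] at hps
    have := congrArg List.length hps
    simp only [List.length_cons, List.length_append, List.length_singleton] at this
    omega
  set w : G.Walk a a := SimpleGraph.Walk.cons hadj_ac p with hw
  have hw_cycle : w.IsCycle := (SimpleGraph.Walk.cons_isCycle_iff p hadj_ac).2 ⟨hp_path, hedge⟩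
  refine ⟨a, w, hw_cycle, ?_⟩
  intro v
  have hwnil : ¬ w.Nil := by simp [hw]
  rw [SimpleGraph.Walk.support_tail_of_not_nil w hwnil, hw, SimpleGraph.Walk.support_cons,
    List.tail_cons, hps, ← hT, hperm_t.count_eq]
  exact List.count_eq_one_of_mem hnd (hall v)

end DiracAux

/-- Dirac's theorem: if `G` is a finite simple undirected graph on `n ≥ 3` vertices
in which every vertex has degree at least `n / 2`, then `G` is Hamiltonian. -/
theorem dirac_theorem {V : Type*} [Fintype V] [DecidableEq V]
    (G : SimpleGraph V) [DecidableRel G.Adj] (n : ℕ)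
    (hn : Fintype.card V = n) (h3 : 3 ≤ n)
    (h : ∀ v : V, (n : ℝ) / 2 ≤ (G.degree v : ℝ)) :
    G.IsHamiltonian := by
  classical
  open DiracAux in
  have hVne : Nonempty V := Fintype.card_pos_iff.1 (by omega)
  obtain ⟨d⟩ := hVne
  have hdeg : ∀ v : V, n ≤ 2 * G.degree v := by
    intro v
    have hv := h v
    have : (n : ℝ) ≤ 2 * (G.degree v : ℝ) := by linarith
    exact_mod_cast this
  have hlen_of : ∀ l : List V, l.Nodup → (∀ v : V, v ∈ l) → l.length = n := by
    intro l hnd hall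
    have h1 : l.toFinset = Finset.univ := Finset.eq_univ_iff_forall.2 (fun v => by
      simpa using hall v)
    have h2 := List.toFinset_card_of_nodup hnd
    rw [h1] at h2
    rw [← h2, Finset.card_univ, hn]
  set S : Set ℕ := {k | ∃ l : List V, l.Nodup ∧ (∀ v : V, v ∈ l) ∧ bc G d l = k} with hS
  have hSne : S.Nonempty := by
    refine ⟨bc G d Finset.univ.toList, Finset.univ.toList, Finset.nodup_toList _, ?_, rfl⟩
    intro v
    simp [Finset.mem_toList]
  obtain ⟨l, hnd, hall, hbck⟩ := Nat.sInf_mem hSne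
  have hlenl : l.length = n := hlen_of l hnd hall
  have hzero : bc G d l = 0 := by
    by_contra hne
    rw [hbck] at hne
    -- find a bad index
    have hne' : bc G d l ≠ 0 := by rw [hbck]; exact hne
    have : ¬ ∀ j ∈ Finset.range l.length,
        badIf G (l.getD j d) (l.getD ((j+1) % l.length) d) = 0 := by
      intro hall0
      exact hne' (Finset.sum_eq_zero hall0)
    push_neg at this
    obtain ⟨j0, hj0mem, hterm⟩ := this
    rw [Finset.mem_range] at hj0mem
    have hbadj : ¬ G.Adj (l.getD j0 d) (l.getD ((j0+1) % l.length) d) := by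
      intro hadj
      exact hterm (by rw [badIf, if_pos hadj])
    set l1 := l.rotate j0 with hl1
    have hperm1 : l1.Perm l := List.rotate_perm l j0
    have hnd1 : l1.Nodup := hperm1.nodup_iff.2 hnd
    have hall1 : ∀ v : V, v ∈ l1 := fun v => hperm1.mem_iff.2 (hall v)
    have hlen1 : l1.length = n := by rw [hl1, List.length_rotate, hlenl]
    have hbad1 : ¬ G.Adj (l1.getD 0 d) (l1.getD 1 d) := by
      rw [hl1, getD_rotate l d j0 0 (by omega), getD_rotate l d j0 1 (by omega)]
      rw [show (0 + j0) % l.length = j0 from by rw [Nat.zero_add, Nat.mod_eq_of_lt hj0mem],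
        show (1 + j0) % l.length = (j0 + 1) % l.length from by rw [Nat.add_comm]]
      exact hbadj
    obtain ⟨i, hi2, hin, hiA, hiB⟩ := pigeon G d l1 hnd1 hall1 (by omega)
      (fun v => by rw [hlen1]; exact hdeg v) hbad1
    rcases hl1eq : l1 with _ | ⟨a, m⟩
    · rw [hl1eq] at hlen1; simp at hlen1; omega
    · rw [hl1eq] at hiA hiB hbad1 hin hnd1 hall1
      obtain ⟨l2, hperm2, hblt⟩ := reversal G d a m i hi2 hin hiA hiB hbad1
      have hnd2 : l2.Nodup := hperm2.nodup_iff.2 hnd1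
      have hall2 : ∀ v : V, v ∈ l2 := fun v => hperm2.mem_iff.2 (hall1 v)
      have hmem2 : bc G d l2 ∈ S := ⟨l2, hnd2, hall2, rfl⟩
      have hle2 : sInf S ≤ bc G d l2 := Nat.sInf_le hmem2
      have heq1 : bc G d (a :: m) = bc G d l := by
        rw [← hl1eq, hl1, bc_rotate]
      omega
  -- now build the Hamiltonian cycle
  have hadjall : ∀ j < l.length, G.Adj (l.getD j d) (l.getD ((j+1) % l.length) d) := by
    intro j hj
    have := (Finset.sum_eq_zero_iff.1 hzero) j (Finset.mem_range.2 hj)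
    by_contra hadj
    rw [badIf, if_neg hadj] at this
    exact one_ne_zero this
  exact ham_of_zero G d l hnd hall (by omega) hadjall
end
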